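/- arXiv:2203.12023 — 5 statements merged into one kernel-verified Lean document; each statement's English description precedes it below -/
import Mathlib

section
/- Let μ and ν be σ-finite measures on measurable spaces 𝒳 and 𝒴 respectively. Let p(x, y) = p₁(x) p₂(y|x) and q(x, y) = q₁(x) q₂(y|x) be probability densities on 𝒳 × 𝒴 with respect to μ ⊗ ν, where p₁, q₁ are probability densities on 𝒳 with respect to μ and, for each x, p₂(·|x), q₂(·|x) are probability densities on 𝒴 with respect to ν. Suppose there is a constant c ∈ [0, 2] such that the squared Hellinger distance between the conditionals satisfies H²(p₂(·|x), q₂(·|x)) ≤ c for every x ∈ 𝒳. Then the squared Hellinger distance between the joint densities satisfies H²(p, q) ≤ 2 − 2(1 − H²(p₁, q₁)/2)(1 − c/2), i.e., H²(p, q) ≤ H²(p₁, q₁) + c − H²(p₁, q₁)·c/2. -/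
open MeasureTheory

/-- Squared Hellinger distance between two densities `f, g` with respect to a base
measure `lam`: `H²(f, g) = ∫ (√f - √g)² dlam`. -/
noncomputable def hellingerSq {α : Type*} [MeasurableSpace α] (lam : Measure α)
    (f g : α → ℝ) : ℝ :=
  ∫ x, (Real.sqrt (f x) - Real.sqrt (g x)) ^ 2 ∂lam

lemma sqrtmul_integrable {α : Type*} [MeasurableSpace α] {lam : Measure α} {f g : α → ℝ}
    (hfm : Measurable f) (hgm : Measurable g)
    (hfpos : ∀ x, 0 ≤ f x) (hgpos : ∀ x, 0 ≤ g x)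
    (hf : Integrable f lam) (hg : Integrable g lam) :
    Integrable (fun x => Real.sqrt (f x) * Real.sqrt (g x)) lam := by
  refine Integrable.mono' (hf.add hg) (hfm.sqrt.mul hgm.sqrt).aestronglyMeasurable
    (Filter.Eventually.of_forall fun x => ?_)
  have h1 := Real.sq_sqrt (hfpos x)
  have h2 := Real.sq_sqrt (hgpos x)
  have h3 := Real.sqrt_nonneg (f x)
  have h4 := Real.sqrt_nonneg (g x)
  simp only [Pi.add_apply]
  rw [Real.norm_eq_abs, abs_of_nonneg (mul_nonneg h3 h4)]
  nlinarith [sq_nonneg (Real.sqrt (f x) - Real.sqrt (g x))]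

lemma hell_eq {α : Type*} [MeasurableSpace α] (lam : Measure α) (f g : α → ℝ)
    (hfm : Measurable f) (hgm : Measurable g)
    (hfpos : ∀ x, 0 ≤ f x) (hgpos : ∀ x, 0 ≤ g x)
    (hf : Integrable f lam) (hg : Integrable g lam) :
    hellingerSq lam f g = (∫ x, f x ∂lam) + (∫ x, g x ∂lam)
      - 2 * ∫ x, Real.sqrt (f x) * Real.sqrt (g x) ∂lam := by
  have hs := sqrtmul_integrable hfm hgm hfpos hgpos hf hg
  have heq : ∀ x, (Real.sqrt (f x) - Real.sqrt (g x)) ^ 2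
      = f x + g x - 2 * (Real.sqrt (f x) * Real.sqrt (g x)) := by
    intro x
    have h1 := Real.sq_sqrt (hfpos x)
    have h2 := Real.sq_sqrt (hgpos x)
    nlinarith
  unfold hellingerSq
  have h1 : Integrable (fun a => f a + g a) lam := hf.add hg
  rw [integral_congr_ae (Filter.Eventually.of_forall heq),
    integral_sub h1 (hs.const_mul 2), integral_add hf hg, MeasureTheory.integral_const_mul]

/-- **Hellinger decomposition for joint densities.** If `p(x,y) = p₁(x) p₂(y|x)` and
`q(x,y) = q₁(x) q₂(y|x)` are probability densities on `𝒳 × 𝒴` with respect to `μ ⊗ ν`,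
and the squared Hellinger distance between the conditionals is bounded by `c ∈ [0, 2]`
uniformly in `x`, then
`H²(p, q) ≤ 2 - 2 (1 - H²(p₁, q₁)/2)(1 - c/2)`. -/
theorem hellingerSq_joint_le
    {𝒳 𝒴 : Type*} [MeasurableSpace 𝒳] [MeasurableSpace 𝒴]
    (μ : Measure 𝒳) (ν : Measure 𝒴) [SigmaFinite μ] [SigmaFinite ν]
    (p₁ q₁ : 𝒳 → ℝ) (p₂ q₂ : 𝒳 → 𝒴 → ℝ)
    (hp₁meas : Measurable p₁) (hq₁meas : Measurable q₁)
    (hp₂meas : Measurable (Function.uncurry p₂)) (hq₂meas : Measurable (Function.uncurry q₂))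
    (hp₁pos : ∀ x, 0 ≤ p₁ x) (hq₁pos : ∀ x, 0 ≤ q₁ x)
    (hp₂pos : ∀ x y, 0 ≤ p₂ x y) (hq₂pos : ∀ x y, 0 ≤ q₂ x y)
    (hp₁int : Integrable p₁ μ) (hq₁int : Integrable q₁ μ)
    (hp₂int : ∀ x, Integrable (p₂ x) ν) (hq₂int : ∀ x, Integrable (q₂ x) ν)
    (hp₁dens : ∫ x, p₁ x ∂μ = 1) (hq₁dens : ∫ x, q₁ x ∂μ = 1)
    (hp₂dens : ∀ x, ∫ y, p₂ x y ∂ν = 1) (hq₂dens : ∀ x, ∫ y, q₂ x y ∂ν = 1)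
    (c : ℝ) (hc0 : 0 ≤ c) (hc2 : c ≤ 2)
    (hcond : ∀ x, hellingerSq ν (p₂ x) (q₂ x) ≤ c) :
    hellingerSq (μ.prod ν) (fun z => p₁ z.1 * p₂ z.1 z.2) (fun z => q₁ z.1 * q₂ z.1 z.2)
      ≤ 2 - 2 * (1 - hellingerSq μ p₁ q₁ / 2) * (1 - c / 2) := by
  -- slice measurability
  have hp₂m : ∀ x, Measurable (p₂ x) := fun x => hp₂meas.comp measurable_prodMk_left
  have hq₂m : ∀ x, Measurable (q₂ x) := fun x => hq₂meas.comp measurable_prodMk_left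
  -- g x = ∫ √(p₂) √(q₂)
  set g : 𝒳 → ℝ := fun x => ∫ y, Real.sqrt (p₂ x y) * Real.sqrt (q₂ x y) ∂ν with hg
  -- conditional Hellinger identity
  have hcondEq : ∀ x, hellingerSq ν (p₂ x) (q₂ x) = 1 + 1 - 2 * g x := by
    intro x
    rw [hell_eq ν (p₂ x) (q₂ x) (hp₂m x) (hq₂m x) (hp₂pos x) (hq₂pos x) (hp₂int x) (hq₂int x),
      hp₂dens x, hq₂dens x]
  have hglb : ∀ x, 1 - c / 2 ≤ g x := by
    intro x; have := hcond x; rw [hcondEq x] at this; linarith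
  have hgub : ∀ x, g x ≤ 1 := by
    intro x
    have h0 : 0 ≤ hellingerSq ν (p₂ x) (q₂ x) :=
      integral_nonneg fun y => sq_nonneg _
    rw [hcondEq x] at h0; linarith
  have hg0 : ∀ x, 0 ≤ g x := fun x =>
    integral_nonneg fun y => mul_nonneg (Real.sqrt_nonneg _) (Real.sqrt_nonneg _)
  -- joint densities
  set P : 𝒳 × 𝒴 → ℝ := fun z => p₁ z.1 * p₂ z.1 z.2 with hP
  set Q : 𝒳 × 𝒴 → ℝ := fun z => q₁ z.1 * q₂ z.1 z.2 with hQ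
  have hPm : Measurable P := (hp₁meas.comp measurable_fst).mul hp₂meas
  have hQm : Measurable Q := (hq₁meas.comp measurable_fst).mul hq₂meas
  have hPpos : ∀ z, 0 ≤ P z := fun z => mul_nonneg (hp₁pos _) (hp₂pos _ _)
  have hQpos : ∀ z, 0 ≤ Q z := fun z => mul_nonneg (hq₁pos _) (hq₂pos _ _)
  have hPint : Integrable P (μ.prod ν) := by
    rw [integrable_prod_iff hPm.aestronglyMeasurable]
    constructor
    · exact Filter.Eventually.of_forall fun x => (hp₂int x).const_mul (p₁ x)
    · refine hp₁int.congr (Filter.Eventually.of_forall fun x => ?_)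
      have : ∀ y, ‖P (x, y)‖ = p₁ x * p₂ x y := fun y => by
        rw [Real.norm_eq_abs, abs_of_nonneg (hPpos (x, y))]
      simp only [this]
      rw [MeasureTheory.integral_const_mul, hp₂dens x, mul_one]
  have hQint : Integrable Q (μ.prod ν) := by
    rw [integrable_prod_iff hQm.aestronglyMeasurable]
    constructor
    · exact Filter.Eventually.of_forall fun x => (hq₂int x).const_mul (q₁ x)
    · refine hq₁int.congr (Filter.Eventually.of_forall fun x => ?_)
      have : ∀ y, ‖Q (x, y)‖ = q₁ x * q₂ x y := fun y => by
        rw [Real.norm_eq_abs, abs_of_nonneg (hQpos (x, y))]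
      simp only [this]
      rw [MeasureTheory.integral_const_mul, hq₂dens x, mul_one]
  have hPdens : ∫ z, P z ∂(μ.prod ν) = 1 := by
    rw [integral_prod _ hPint]
    have : ∀ x, ∫ y, P (x, y) ∂ν = p₁ x := fun x => by
      simp only [hP]
      rw [MeasureTheory.integral_const_mul, hp₂dens x, mul_one]
    simp only [this]; exact hp₁dens
  have hQdens : ∫ z, Q z ∂(μ.prod ν) = 1 := by
    rw [integral_prod _ hQint]
    have : ∀ x, ∫ y, Q (x, y) ∂ν = q₁ x := fun x => by
      simp only [hQ]
      rw [MeasureTheory.integral_const_mul, hq₂dens x, mul_one]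
    simp only [this]; exact hq₁dens
  -- joint Hellinger identity
  have hSint : Integrable (fun z => Real.sqrt (P z) * Real.sqrt (Q z)) (μ.prod ν) :=
    sqrtmul_integrable hPm hQm hPpos hQpos hPint hQint
  have hjoint : hellingerSq (μ.prod ν) P Q
      = 2 - 2 * ∫ z, Real.sqrt (P z) * Real.sqrt (Q z) ∂(μ.prod ν) := by
    rw [hell_eq (μ.prod ν) P Q hPm hQm hPpos hQpos hPint hQint, hPdens, hQdens]
    ring
  -- Fubini for the sqrt product
  have hslice : ∀ x, ∫ y, Real.sqrt (P (x, y)) * Real.sqrt (Q (x, y)) ∂ν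
      = Real.sqrt (p₁ x) * Real.sqrt (q₁ x) * g x := by
    intro x
    have : ∀ y, Real.sqrt (P (x, y)) * Real.sqrt (Q (x, y))
        = Real.sqrt (p₁ x) * Real.sqrt (q₁ x)
          * (Real.sqrt (p₂ x y) * Real.sqrt (q₂ x y)) := fun y => by
      simp only [hP, hQ]
      rw [Real.sqrt_mul (hp₁pos x), Real.sqrt_mul (hq₁pos x)]
      ring
    simp only [this]
    rw [MeasureTheory.integral_const_mul]
  have hfub : ∫ z, Real.sqrt (P z) * Real.sqrt (Q z) ∂(μ.prod ν)
      = ∫ x, Real.sqrt (p₁ x) * Real.sqrt (q₁ x) * g x ∂μ := by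
    rw [integral_prod _ hSint]
    exact integral_congr_ae (Filter.Eventually.of_forall hslice)
  -- integrability for the outer bounds
  have hKint : Integrable (fun x => Real.sqrt (p₁ x) * Real.sqrt (q₁ x)) μ :=
    sqrtmul_integrable hp₁meas hq₁meas hp₁pos hq₁pos hp₁int hq₁int
  have hgmeas : StronglyMeasurable g := by
    apply StronglyMeasurable.integral_prod_right' (f := fun z : 𝒳 × 𝒴 =>
      Real.sqrt (p₂ z.1 z.2) * Real.sqrt (q₂ z.1 z.2))
    exact (hp₂meas.sqrt.mul hq₂meas.sqrt).stronglyMeasurable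
  have hJint : Integrable (fun x => Real.sqrt (p₁ x) * Real.sqrt (q₁ x) * g x) μ := by
    refine Integrable.mono' hKint
      ((hKint.aestronglyMeasurable.aemeasurable.mul hgmeas.aemeasurable).aestronglyMeasurable)
      (Filter.Eventually.of_forall fun x => ?_)
    have h1 : 0 ≤ Real.sqrt (p₁ x) * Real.sqrt (q₁ x) :=
      mul_nonneg (Real.sqrt_nonneg _) (Real.sqrt_nonneg _)
    rw [Real.norm_eq_abs, abs_of_nonneg (mul_nonneg h1 (hg0 x))]
    nlinarith [hgub x, hg0 x]
  -- lower bound J ≥ (1 - c/2) K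
  have hJK : (1 - c / 2) * ∫ x, Real.sqrt (p₁ x) * Real.sqrt (q₁ x) ∂μ
      ≤ ∫ x, Real.sqrt (p₁ x) * Real.sqrt (q₁ x) * g x ∂μ := by
    rw [← MeasureTheory.integral_const_mul]
    refine integral_mono (hKint.const_mul _) hJint fun x => ?_
    have h1 : 0 ≤ Real.sqrt (p₁ x) * Real.sqrt (q₁ x) :=
      mul_nonneg (Real.sqrt_nonneg _) (Real.sqrt_nonneg _)
    nlinarith [hglb x]
  -- marginal Hellinger identity
  have hmarg : hellingerSq μ p₁ q₁
      = 2 - 2 * ∫ x, Real.sqrt (p₁ x) * Real.sqrt (q₁ x) ∂μ := by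
    rw [hell_eq μ p₁ q₁ hp₁meas hq₁meas hp₁pos hq₁pos hp₁int hq₁int, hp₁dens, hq₁dens]
    ring
  rw [hjoint, hfub, hmarg]
  nlinarith [hJK]
end

section
/- Let μ and ν be σ-finite measures on measurable spaces 𝒳 and 𝒴 respectively. Let P and Q be probability measures on 𝒳 × 𝒴 with densities p(x, y) = p₁(x) p₂(y|x) and q(x, y) = q₁(x) q₂(y|x) with respect to μ ⊗ ν, where p₁, q₁ are probability densities on 𝒳 and for each x, p₂(·|x), q₂(·|x) are probability densities on 𝒴. Suppose d_TV(P_X, Q_X) ≤ ε₁, where P_X, Q_X are the marginals with densities p₁, q₁, and suppose d_TV(p₂(·|x), q₂(·|x)) ≤ ε₂ for every x ∈ 𝒳, with ε₁, ε₂ ∈ [0, 1]. Then d_TV(P, Q) ≤ √(2ε₁) + √(2ε₂). -/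
open MeasureTheory

/-- Total variation distance between two measures:
`d_TV(P, Q) = sup_{A measurable} |P(A) - Q(A)|`. -/
noncomputable def tvDist {X : Type*} [MeasurableSpace X] (P Q : Measure X) : ℝ :=
  ⨆ A : {A : Set X // MeasurableSet A}, |(P A.1).toReal - (Q A.1).toReal|

lemma wd_apply_toReal {X : Type*} [MeasurableSpace X] (μ : Measure X) {f : X → ℝ}
    (hfm : Measurable f) (h0 : ∀ x, 0 ≤ f x) {A : Set X} (hA : MeasurableSet A) :
    ((μ.withDensity fun x => ENNReal.ofReal (f x)) A).toReal = ∫ x in A, f x ∂μ := by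
  rw [withDensity_apply _ hA]
  rw [integral_eq_lintegral_of_nonneg_ae (ae_of_all _ h0)
    (hfm.aestronglyMeasurable.restrict)]

lemma setIntegral_abs_diff_le {X : Type*} [MeasurableSpace X] {μ : Measure X} {f g : X → ℝ}
    (hf : Integrable f μ) (hg : Integrable g μ) (hfg : ∫ x, f x ∂μ = ∫ x, g x ∂μ)
    {A : Set X} (hA : MeasurableSet A) :
    |(∫ x in A, f x ∂μ) - ∫ x in A, g x ∂μ| ≤ (1/2) * ∫ x, |f x - g x| ∂μ := by
  have hsub : Integrable (fun x => f x - g x) μ := hf.sub hg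
  have habs : Integrable (fun x => |f x - g x|) μ := hsub.abs
  have h1 : (∫ x in A, f x ∂μ) - ∫ x in A, g x ∂μ = ∫ x in A, (f x - g x) ∂μ :=
    (integral_sub hf.integrableOn hg.integrableOn).symm
  have h2 : (∫ x in A, (f x - g x) ∂μ) + ∫ x in Aᶜ, (f x - g x) ∂μ = 0 := by
    rw [integral_add_compl hA hsub]
    simp [integral_sub hf hg, hfg]
  have h3 : ∫ x in Aᶜ, (f x - g x) ∂μ = -∫ x in A, (f x - g x) ∂μ := by linarith
  have h4 : (∫ x in A, |f x - g x| ∂μ) + ∫ x in Aᶜ, |f x - g x| ∂μ = ∫ x, |f x - g x| ∂μ :=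
    integral_add_compl hA habs
  have h5 : |∫ x in A, (f x - g x) ∂μ| ≤ ∫ x in A, |f x - g x| ∂μ := by
    simpa using norm_integral_le_integral_norm (μ := μ.restrict A) (fun x => f x - g x)
  have h6 : |∫ x in Aᶜ, (f x - g x) ∂μ| ≤ ∫ x in Aᶜ, |f x - g x| ∂μ := by
    simpa using norm_integral_le_integral_norm (μ := μ.restrict Aᶜ) (fun x => f x - g x)
  rw [h1]
  rw [h3] at h6
  rw [abs_neg] at h6
  linarith

lemma l1_le_of_sets {X : Type*} [MeasurableSpace X] {μ : Measure X} {f g : X → ℝ}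
    (hfm : Measurable f) (hgm : Measurable g) (hf : Integrable f μ) (hg : Integrable g μ)
    (hfg : ∫ x, f x ∂μ = ∫ x, g x ∂μ) {ε : ℝ}
    (h : ∀ A : Set X, MeasurableSet A → |(∫ x in A, f x ∂μ) - ∫ x in A, g x ∂μ| ≤ ε) :
    ∫ x, |f x - g x| ∂μ ≤ 2 * ε := by
  set A : Set X := {x | g x ≤ f x} with hAdef
  have hA : MeasurableSet A := measurableSet_le hgm hfm
  have hsub : Integrable (fun x => f x - g x) μ := hf.sub hg
  have habs : Integrable (fun x => |f x - g x|) μ := hsub.abs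
  have h4 : (∫ x in A, |f x - g x| ∂μ) + ∫ x in Aᶜ, |f x - g x| ∂μ = ∫ x, |f x - g x| ∂μ :=
    integral_add_compl hA habs
  have hOnA : ∫ x in A, |f x - g x| ∂μ = (∫ x in A, f x ∂μ) - ∫ x in A, g x ∂μ := by
    rw [← integral_sub hf.integrableOn hg.integrableOn]
    refine setIntegral_congr_fun hA fun x hx => ?_
    exact abs_of_nonneg (sub_nonneg.2 hx)
  have hOnAc : ∫ x in Aᶜ, |f x - g x| ∂μ = (∫ x in Aᶜ, g x ∂μ) - ∫ x in Aᶜ, f x ∂μ := by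
    rw [← integral_sub hg.integrableOn hf.integrableOn]
    refine setIntegral_congr_fun hA.compl fun x hx => ?_
    have : f x < g x := lt_of_not_ge hx
    rw [abs_of_nonpos (by linarith)]; ring
  have hcf : (∫ x in A, f x ∂μ) + ∫ x in Aᶜ, f x ∂μ = ∫ x, f x ∂μ := integral_add_compl hA hf
  have hcg : (∫ x in A, g x ∂μ) + ∫ x in Aᶜ, g x ∂μ = ∫ x, g x ∂μ := integral_add_compl hA hg
  have hb := h A hA
  have := abs_le.1 hb
  linarith [this.1, this.2]

lemma extract {X : Type*} [MeasurableSpace X] (κ : Measure X) (f g : X → ℝ)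
    (hfm : Measurable f) (hgm : Measurable g) (hf0 : ∀ x, 0 ≤ f x) (hg0 : ∀ x, 0 ≤ g x)
    (hfi : Integrable f κ) (hgi : Integrable g κ)
    (hf1 : ∫ x, f x ∂κ = 1) (hg1 : ∫ x, g x ∂κ = 1) {ε : ℝ}
    (htv : tvDist (κ.withDensity (fun x => ENNReal.ofReal (f x)))
        (κ.withDensity (fun x => ENNReal.ofReal (g x))) ≤ ε)
    (A : Set X) (hA : MeasurableSet A) :
    |(∫ x in A, f x ∂κ) - ∫ x in A, g x ∂κ| ≤ ε := by
  have hbdd : BddAbove (Set.range fun A : {A : Set X // MeasurableSet A} =>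
      |((κ.withDensity fun x => ENNReal.ofReal (f x)) A.1).toReal -
        ((κ.withDensity fun x => ENNReal.ofReal (g x)) A.1).toReal|) := by
    refine ⟨2, ?_⟩
    rintro _ ⟨B, rfl⟩
    simp only
    rw [wd_apply_toReal κ hfm hf0 B.2, wd_apply_toReal κ hgm hg0 B.2]
    have h1 : 0 ≤ ∫ x in B.1, f x ∂κ := setIntegral_nonneg B.2 fun x _ => hf0 x
    have h2 : (∫ x in B.1, f x ∂κ) ≤ 1 := by
      rw [← hf1]; exact setIntegral_le_integral hfi (ae_of_all _ hf0)
    have h3 : 0 ≤ ∫ x in B.1, g x ∂κ := setIntegral_nonneg B.2 fun x _ => hg0 x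
    have h4 : (∫ x in B.1, g x ∂κ) ≤ 1 := by
      rw [← hg1]; exact setIntegral_le_integral hgi (ae_of_all _ hg0)
    rw [abs_sub_le_iff]; constructor <;> linarith
  have hle := le_trans (le_ciSup hbdd (⟨A, hA⟩ : {A : Set X // MeasurableSet A})) htv
  rwa [wd_apply_toReal κ hfm hf0 hA, wd_apply_toReal κ hgm hg0 hA] at hle


/-- **Total variation bound for joint distributions.** If `P` and `Q` have densities
`p(x,y) = p₁(x) p₂(y|x)` and `q(x,y) = q₁(x) q₂(y|x)` with respect to `μ ⊗ ν`,
the marginals satisfy `d_TV(P_X, Q_X) ≤ ε₁`, and the conditionals satisfy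
`d_TV(p₂(·|x), q₂(·|x)) ≤ ε₂` for every `x`, with `ε₁, ε₂ ∈ [0, 1]`, then
`d_TV(P, Q) ≤ √(2 ε₁) + √(2 ε₂)`. -/
theorem tvDist_joint_le
    {𝒳 𝒴 : Type*} [MeasurableSpace 𝒳] [MeasurableSpace 𝒴]
    (μ : Measure 𝒳) (ν : Measure 𝒴) [SigmaFinite μ] [SigmaFinite ν]
    (p₁ q₁ : 𝒳 → ℝ) (p₂ q₂ : 𝒳 → 𝒴 → ℝ)
    (P Q : Measure (𝒳 × 𝒴))
    (hp₁meas : Measurable p₁) (hq₁meas : Measurable q₁)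
    (hp₂meas : Measurable (Function.uncurry p₂)) (hq₂meas : Measurable (Function.uncurry q₂))
    (hp₁pos : ∀ x, 0 ≤ p₁ x) (hq₁pos : ∀ x, 0 ≤ q₁ x)
    (hp₂pos : ∀ x y, 0 ≤ p₂ x y) (hq₂pos : ∀ x y, 0 ≤ q₂ x y)
    (hp₁int : Integrable p₁ μ) (hq₁int : Integrable q₁ μ)
    (hp₂int : ∀ x, Integrable (p₂ x) ν) (hq₂int : ∀ x, Integrable (q₂ x) ν)
    (hp₁dens : ∫ x, p₁ x ∂μ = 1) (hq₁dens : ∫ x, q₁ x ∂μ = 1)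
    (hp₂dens : ∀ x, ∫ y, p₂ x y ∂ν = 1) (hq₂dens : ∀ x, ∫ y, q₂ x y ∂ν = 1)
    (hP : P = (μ.prod ν).withDensity (fun z => ENNReal.ofReal (p₁ z.1 * p₂ z.1 z.2)))
    (hQ : Q = (μ.prod ν).withDensity (fun z => ENNReal.ofReal (q₁ z.1 * q₂ z.1 z.2)))
    (ε₁ ε₂ : ℝ) (hε₁0 : 0 ≤ ε₁) (hε₁1 : ε₁ ≤ 1) (hε₂0 : 0 ≤ ε₂) (hε₂1 : ε₂ ≤ 1)
    (hmarg : tvDist (μ.withDensity (fun x => ENNReal.ofReal (p₁ x)))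
        (μ.withDensity (fun x => ENNReal.ofReal (q₁ x))) ≤ ε₁)
    (hcond : ∀ x, tvDist (ν.withDensity (fun y => ENNReal.ofReal (p₂ x y)))
        (ν.withDensity (fun y => ENNReal.ofReal (q₂ x y))) ≤ ε₂) :
    tvDist P Q ≤ Real.sqrt (2 * ε₁) + Real.sqrt (2 * ε₂) := by
  -- L1 bounds
  have hL1marg : ∫ x, |p₁ x - q₁ x| ∂μ ≤ 2 * ε₁ :=
    l1_le_of_sets hp₁meas hq₁meas hp₁int hq₁int (hp₁dens.trans hq₁dens.symm)
      (extract μ p₁ q₁ hp₁meas hq₁meas hp₁pos hq₁pos hp₁int hq₁int hp₁dens hq₁dens hmarg)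
  have hL1cond : ∀ x, ∫ y, |p₂ x y - q₂ x y| ∂ν ≤ 2 * ε₂ := fun x =>
    l1_le_of_sets (hp₂meas.of_uncurry_left) (hq₂meas.of_uncurry_left)
      (hp₂int x) (hq₂int x) ((hp₂dens x).trans (hq₂dens x).symm)
      (extract ν (p₂ x) (q₂ x) (hp₂meas.of_uncurry_left) (hq₂meas.of_uncurry_left)
        (hp₂pos x) (hq₂pos x) (hp₂int x) (hq₂int x) (hp₂dens x) (hq₂dens x) (hcond x))
  -- joint densities
  set f : 𝒳 × 𝒴 → ℝ := fun z => p₁ z.1 * p₂ z.1 z.2 with hfdef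
  set g : 𝒳 × 𝒴 → ℝ := fun z => q₁ z.1 * q₂ z.1 z.2 with hgdef
  have hfm : Measurable f := (hp₁meas.comp measurable_fst).mul hp₂meas
  have hgm : Measurable g := (hq₁meas.comp measurable_fst).mul hq₂meas
  have hf0 : ∀ z, 0 ≤ f z := fun z => mul_nonneg (hp₁pos _) (hp₂pos _ _)
  have hg0 : ∀ z, 0 ≤ g z := fun z => mul_nonneg (hq₁pos _) (hq₂pos _ _)
  have hfint : Integrable f (μ.prod ν) := by
    rw [integrable_prod_iff hfm.aestronglyMeasurable]
    refine ⟨ae_of_all _ fun x => ((hp₂int x).const_mul (p₁ x) : _), ?_⟩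
    refine hp₁int.congr (ae_of_all _ fun x => ?_)
    have : (fun y => ‖p₁ x * p₂ x y‖) = fun y => p₁ x * p₂ x y := by
      funext y; rw [Real.norm_eq_abs, abs_of_nonneg (mul_nonneg (hp₁pos x) (hp₂pos x y))]
    simp only [hfdef]
    rw [this, integral_const_mul, hp₂dens x, mul_one]
  have hgint : Integrable g (μ.prod ν) := by
    rw [integrable_prod_iff hgm.aestronglyMeasurable]
    refine ⟨ae_of_all _ fun x => ((hq₂int x).const_mul (q₁ x) : _), ?_⟩
    refine hq₁int.congr (ae_of_all _ fun x => ?_)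
    have : (fun y => ‖q₁ x * q₂ x y‖) = fun y => q₁ x * q₂ x y := by
      funext y; rw [Real.norm_eq_abs, abs_of_nonneg (mul_nonneg (hq₁pos x) (hq₂pos x y))]
    simp only [hgdef]
    rw [this, integral_const_mul, hq₂dens x, mul_one]
  have hfI : ∫ z, f z ∂(μ.prod ν) = 1 := by
    rw [integral_prod _ hfint]
    have : (fun x => ∫ y, f (x, y) ∂ν) = p₁ := by
      funext x; simp only [hfdef]; rw [integral_const_mul, hp₂dens x, mul_one]
    rw [this, hp₁dens]
  have hgI : ∫ z, g z ∂(μ.prod ν) = 1 := by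
    rw [integral_prod _ hgint]
    have : (fun x => ∫ y, g (x, y) ∂ν) = q₁ := by
      funext x; simp only [hgdef]; rw [integral_const_mul, hq₂dens x, mul_one]
    rw [this, hq₁dens]
  -- joint L1 bound
  have habs : Integrable (fun z => |f z - g z|) (μ.prod ν) := (hfint.sub hgint).abs
  have hL1joint : ∫ z, |f z - g z| ∂(μ.prod ν) ≤ 2 * ε₁ + 2 * ε₂ := by
    rw [integral_prod _ habs]
    have habs1 : Integrable (fun x => |p₁ x - q₁ x|) μ := (hp₁int.sub hq₁int).abs
    have hD : Integrable (fun x => |p₁ x - q₁ x| + q₁ x * (2 * ε₂)) μ :=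
      habs1.add (hq₁int.mul_const _)
    have hmono : ∫ x, (∫ y, |f (x, y) - g (x, y)| ∂ν) ∂μ ≤
        ∫ x, (|p₁ x - q₁ x| + q₁ x * (2 * ε₂)) ∂μ := by
      refine integral_mono_of_nonneg (ae_of_all _ fun x => integral_nonneg fun y => abs_nonneg _)
        hD (ae_of_all _ fun x => ?_)
      have habs2 : Integrable (fun y => |p₂ x y - q₂ x y|) ν := ((hp₂int x).sub (hq₂int x)).abs
      have hint1 : Integrable (fun y => |p₁ x * p₂ x y - q₁ x * q₂ x y|) ν :=
        (((hp₂int x).const_mul _).sub ((hq₂int x).const_mul _)).abs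
      have hint2a : Integrable (fun y => |p₁ x - q₁ x| * p₂ x y) ν := (hp₂int x).const_mul _
      have hint2b : Integrable (fun y => q₁ x * |p₂ x y - q₂ x y|) ν := habs2.const_mul _
      have hint2 : Integrable (fun y => |p₁ x - q₁ x| * p₂ x y + q₁ x * |p₂ x y - q₂ x y|) ν :=
        hint2a.add hint2b
      calc ∫ y, |f (x, y) - g (x, y)| ∂ν
          ≤ ∫ y, (|p₁ x - q₁ x| * p₂ x y + q₁ x * |p₂ x y - q₂ x y|) ∂ν := by
            refine integral_mono hint1 hint2 fun y => ?_
            simp only [hfdef, hgdef]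
            have key : p₁ x * p₂ x y - q₁ x * q₂ x y
                = (p₁ x - q₁ x) * p₂ x y + q₁ x * (p₂ x y - q₂ x y) := by ring
            rw [key]
            calc |(p₁ x - q₁ x) * p₂ x y + q₁ x * (p₂ x y - q₂ x y)|
                ≤ |(p₁ x - q₁ x) * p₂ x y| + |q₁ x * (p₂ x y - q₂ x y)| := abs_add_le _ _
              _ = |p₁ x - q₁ x| * p₂ x y + q₁ x * |p₂ x y - q₂ x y| := by
                  rw [abs_mul, abs_mul, abs_of_nonneg (hp₂pos x y), abs_of_nonneg (hq₁pos x)]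
        _ = |p₁ x - q₁ x| * (∫ y, p₂ x y ∂ν) + q₁ x * ∫ y, |p₂ x y - q₂ x y| ∂ν := by
            rw [integral_add hint2a hint2b, integral_const_mul, integral_const_mul]
        _ ≤ |p₁ x - q₁ x| + q₁ x * (2 * ε₂) := by
            rw [hp₂dens x, mul_one]
            exact add_le_add_right (mul_le_mul_of_nonneg_left (hL1cond x) (hq₁pos x)) _
    refine hmono.trans ?_
    rw [integral_add habs1 (hq₁int.mul_const _), integral_mul_const, hq₁dens,
      one_mul]
    linarith
  -- finish
  refine Real.iSup_le (fun A => ?_) (by positivity)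
  obtain ⟨A, hA⟩ := A
  rw [hP, hQ, wd_apply_toReal _ hfm hf0 hA, wd_apply_toReal _ hgm hg0 hA]
  have hset := setIntegral_abs_diff_le hfint hgint (hfI.trans hgI.symm) hA
  have hsq1 : ε₁ ≤ Real.sqrt (2 * ε₁) := by
    nlinarith [Real.sq_sqrt (show (0:ℝ) ≤ 2 * ε₁ by linarith), Real.sqrt_nonneg (2 * ε₁),
      sq_nonneg (Real.sqrt (2 * ε₁) - ε₁), sq_nonneg (Real.sqrt (2 * ε₁) - 1)]
  have hsq2 : ε₂ ≤ Real.sqrt (2 * ε₂) := by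
    nlinarith [Real.sq_sqrt (show (0:ℝ) ≤ 2 * ε₂ by linarith), Real.sqrt_nonneg (2 * ε₂),
      sq_nonneg (Real.sqrt (2 * ε₂) - ε₂), sq_nonneg (Real.sqrt (2 * ε₂) - 1)]
  calc |(∫ z in A, f z ∂(μ.prod ν)) - ∫ z in A, g z ∂(μ.prod ν)|
      ≤ (1/2) * ∫ z, |f z - g z| ∂(μ.prod ν) := hset
    _ ≤ (1/2) * (2 * ε₁ + 2 * ε₂) := by linarith
    _ = ε₁ + ε₂ := by ring
    _ ≤ Real.sqrt (2 * ε₁) + Real.sqrt (2 * ε₂) := add_le_add hsq1 hsq2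
end

section
/- Let 𝒟 and 𝒟̂ be probability measures on 𝒳 × 𝒴 admitting densities of product-conditional form p(x, y) = p₁(x)p₂(y|x) and q(x, y) = q₁(x)q₂(y|x) with respect to a σ-finite product measure μ ⊗ ν. Let ℱ be a family of classifiers and ℓ a loss function with 0 ≤ ℓ(f, z) ≤ B_ℓ for all f ∈ ℱ and all z, measurable in z for each f, and let R̂_{𝒟̂}(f) be any empirical risk functional. Suppose: (i) sup_{f ∈ ℱ} |R̂_{𝒟̂}(f) − R_{𝒟̂}(f)| ≤ A for some real A ≥ 0; (ii) d_TV(𝒟̂_X, 𝒟_X) ≤ ε₁ for the feature marginals; (iii) d_TV(q₂(·|x), p₂(·|x)) ≤ ε₂ for every x ∈ 𝒳, with ε₁, ε₂ ∈ [0, 1]. Then sup_{f ∈ ℱ} |R̂_{𝒟̂}(f) − R_𝒟(f)| ≤ A + B_ℓ (√(2ε₁) + √(2ε₂)). -/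
open MeasureTheory

lemma tvDist_comm {X : Type*} [MeasurableSpace X] (P Q : Measure X) :
    tvDist P Q = tvDist Q P := by
  unfold tvDist
  congr 1; funext A; rw [abs_sub_comm]

lemma tvDist_bddAbove {X : Type*} [MeasurableSpace X] {μ : Measure X} {p q : X → ℝ}
    (hpi : Integrable p μ) (hqi : Integrable q μ) :
    BddAbove (Set.range fun A : {A : Set X // MeasurableSet A} =>
      |((μ.withDensity fun x => ENNReal.ofReal (q x)) A.1).toReal -
       ((μ.withDensity fun x => ENNReal.ofReal (p x)) A.1).toReal|) := by
  set Q := μ.withDensity fun x => ENNReal.ofReal (q x)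
  set P := μ.withDensity fun x => ENNReal.ofReal (p x)
  have hQfin : Q Set.univ < ⊤ := by
    rw [withDensity_apply _ MeasurableSet.univ]
    simpa [Measure.restrict_univ] using hqi.lintegral_lt_top
  have hPfin : P Set.univ < ⊤ := by
    rw [withDensity_apply _ MeasurableSet.univ]
    simpa [Measure.restrict_univ] using hpi.lintegral_lt_top
  refine ⟨(Q Set.univ).toReal + (P Set.univ).toReal, ?_⟩
  rintro _ ⟨A, rfl⟩
  have hQA : (Q A.1).toReal ≤ (Q Set.univ).toReal :=
    ENNReal.toReal_mono hQfin.ne (measure_mono (Set.subset_univ _))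
  have hPA : (P A.1).toReal ≤ (P Set.univ).toReal :=
    ENNReal.toReal_mono hPfin.ne (measure_mono (Set.subset_univ _))
  have h1 : (0:ℝ) ≤ (Q A.1).toReal := ENNReal.toReal_nonneg
  have h2 : (0:ℝ) ≤ (P A.1).toReal := ENNReal.toReal_nonneg
  exact abs_sub_le_iff.mpr ⟨by linarith, by linarith⟩

lemma toReal_withDensity_ofReal {X : Type*} [MeasurableSpace X] (μ : Measure X)
    {q : X → ℝ} (hq : Measurable q) (hq0 : ∀ x, 0 ≤ q x) {s : Set X}
    (hs : MeasurableSet s) :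
    ((μ.withDensity fun x => ENNReal.ofReal (q x)) s).toReal = ∫ x in s, q x ∂μ := by
  rw [integral_eq_lintegral_of_nonneg_ae (Filter.Eventually.of_forall fun x => hq0 x)
    hq.aestronglyMeasurable.restrict, withDensity_apply _ hs]

lemma one_side {X : Type*} [MeasurableSpace X] (μ : Measure X)
    {p q : X → ℝ} (hp : Measurable p) (hq : Measurable q)
    (hp0 : ∀ x, 0 ≤ p x) (hq0 : ∀ x, 0 ≤ q x)
    (hpi : Integrable p μ) (hqi : Integrable q μ)
    {g : X → ℝ} (hg : Measurable g) {B : ℝ} (hB : 0 ≤ B)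
    (hgB : ∀ x, g x ∈ Set.Icc 0 B) :
    (∫ x, g x * q x ∂μ) - ∫ x, g x * p x ∂μ ≤
      B * tvDist (μ.withDensity fun x => ENNReal.ofReal (q x))
        (μ.withDensity fun x => ENNReal.ofReal (p x)) := by
  set Q := μ.withDensity fun x => ENNReal.ofReal (q x) with hQdef
  set P := μ.withDensity fun x => ENNReal.ofReal (p x) with hPdef
  have hgbd : ∃ C, ∀ x, ‖g x‖ ≤ C :=
    ⟨B, fun x => by rw [Real.norm_eq_abs, abs_of_nonneg (hgB x).1]; exact (hgB x).2⟩
  have hgq : Integrable (fun x => g x * q x) μ := hqi.bdd_mul hg.aestronglyMeasurable (Filter.Eventually.of_forall hgbd.choose_spec)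
  have hgp : Integrable (fun x => g x * p x) μ := hpi.bdd_mul hg.aestronglyMeasurable (Filter.Eventually.of_forall hgbd.choose_spec)
  set S : Set X := {x | p x < q x} with hSdef
  have hS : MeasurableSet S := measurableSet_lt hp hq
  have hd : Integrable (fun x => g x * q x - g x * p x) μ := hgq.sub hgp
  have hsplit := integral_add_compl hS hd
  rw [← integral_sub hgq hgp, ← hsplit]
  have hcompl : ∫ x in Sᶜ, (g x * q x - g x * p x) ∂μ ≤ 0 := by
    refine setIntegral_nonpos hS.compl fun x hx => ?_
    have : q x ≤ p x := le_of_not_gt hx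
    nlinarith [(hgB x).1]
  have hSpart : ∫ x in S, (g x * q x - g x * p x) ∂μ ≤
      B * ((Q S).toReal - (P S).toReal) := by
    have h1 : ∫ x in S, (g x * q x - g x * p x) ∂μ ≤ ∫ x in S, B * (q x - p x) ∂μ := by
      refine setIntegral_mono_on hd.integrableOn
        (((hqi.sub hpi).const_mul B).integrableOn) hS fun x hx => ?_
      have hx' : p x ≤ q x := le_of_lt hx
      nlinarith [(hgB x).1, (hgB x).2]
    have h2 : ∫ x in S, B * (q x - p x) ∂μ = B * ((Q S).toReal - (P S).toReal) := by
      rw [integral_const_mul, integral_sub hqi.integrableOn hpi.integrableOn,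
        toReal_withDensity_ofReal μ hq hq0 hS, toReal_withDensity_ofReal μ hp hp0 hS]
    linarith
  have htv : (Q S).toReal - (P S).toReal ≤ tvDist Q P := by
    refine le_trans (le_abs_self _) ?_
    exact le_ciSup (tvDist_bddAbove hpi hqi) (⟨S, hS⟩ : {A : Set X // MeasurableSet A})
  have := mul_le_mul_of_nonneg_left htv hB
  linarith

lemma abs_integral_mul_sub_le_tv {X : Type*} [MeasurableSpace X] (μ : Measure X)
    {p q : X → ℝ} (hp : Measurable p) (hq : Measurable q)
    (hp0 : ∀ x, 0 ≤ p x) (hq0 : ∀ x, 0 ≤ q x)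
    (hpi : Integrable p μ) (hqi : Integrable q μ)
    {g : X → ℝ} (hg : Measurable g) {B : ℝ} (hB : 0 ≤ B)
    (hgB : ∀ x, g x ∈ Set.Icc 0 B) :
    |(∫ x, g x * q x ∂μ) - ∫ x, g x * p x ∂μ| ≤
      B * tvDist (μ.withDensity fun x => ENNReal.ofReal (q x))
        (μ.withDensity fun x => ENNReal.ofReal (p x)) := by
  rw [abs_sub_le_iff]
  refine ⟨one_side μ hp hq hp0 hq0 hpi hqi hg hB hgB, ?_⟩
  rw [tvDist_comm]
  exact one_side μ hq hp hq0 hp0 hqi hpi hg hB hgB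


lemma eps_le_sqrt_two_eps {ε : ℝ} (h0 : 0 ≤ ε) (h1 : ε ≤ 1) : ε ≤ Real.sqrt (2 * ε) := by
  have h2 : ε ^ 2 ≤ 2 * ε := by nlinarith
  calc ε = Real.sqrt (ε ^ 2) := (Real.sqrt_sq h0).symm
    _ ≤ Real.sqrt (2 * ε) := Real.sqrt_le_sqrt h2

/-- Rewrite an integral against a `withDensity` measure as a weighted integral. -/
lemma integral_withDensity_ofReal {X : Type*} [MeasurableSpace X] (μ : Measure X)
    {r : X → ℝ} (hr : Measurable r) (hr0 : ∀ x, 0 ≤ r x) (g : X → ℝ) :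
    ∫ x, g x ∂(μ.withDensity fun x => ENNReal.ofReal (r x)) = ∫ x, g x * r x ∂μ := by
  have h1 : (fun x => ENNReal.ofReal (r x)) = fun x => ((fun x => (r x).toNNReal) x : ENNReal) := rfl
  rw [h1, integral_withDensity_eq_integral_smul (hr.real_toNNReal) g]
  refine integral_congr_ae (Filter.Eventually.of_forall fun x => ?_)
  simp [NNReal.smul_def, Real.coe_toNNReal _ (hr0 x), mul_comm]

lemma risk_repr {𝒳 𝒴 : Type*} [MeasurableSpace 𝒳] [MeasurableSpace 𝒴]
    (μ : Measure 𝒳) (ν : Measure 𝒴) [SigmaFinite μ] [SigmaFinite ν]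
    {r₁ : 𝒳 → ℝ} {r₂ : 𝒳 → 𝒴 → ℝ}
    (hr₁ : Measurable r₁) (hr₂ : Measurable (Function.uncurry r₂))
    (hr₁0 : ∀ x, 0 ≤ r₁ x) (hr₂0 : ∀ x y, 0 ≤ r₂ x y)
    (hr₁int : Integrable r₁ μ) (hr₂int : ∀ x, Integrable (r₂ x) ν)
    (hr₂dens : ∀ x, ∫ y, r₂ x y ∂ν = 1)
    {ℓ : 𝒳 × 𝒴 → ℝ} (hℓ : Measurable ℓ) {B : ℝ}
    (hbd : ∀ z, ℓ z ∈ Set.Icc 0 B) :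
    ∫ z, ℓ z ∂((μ.prod ν).withDensity fun z => ENNReal.ofReal (r₁ z.1 * r₂ z.1 z.2))
      = ∫ x, (∫ y, ℓ (x, y) * r₂ x y ∂ν) * r₁ x ∂μ := by
  have hr₂' : Measurable fun z : 𝒳 × 𝒴 => r₂ z.1 z.2 := hr₂
  have hdm : Measurable fun z : 𝒳 × 𝒴 => r₁ z.1 * r₂ z.1 z.2 :=
    (hr₁.comp measurable_fst).mul hr₂'
  have hd0 : ∀ z : 𝒳 × 𝒴, 0 ≤ r₁ z.1 * r₂ z.1 z.2 :=
    fun z => mul_nonneg (hr₁0 _) (hr₂0 _ _)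
  rw [integral_withDensity_ofReal (μ.prod ν) hdm hd0 ℓ]
  have hdint : Integrable (fun z : 𝒳 × 𝒴 => r₁ z.1 * r₂ z.1 z.2) (μ.prod ν) := by
    rw [integrable_prod_iff hdm.aestronglyMeasurable]
    constructor
    · exact Filter.Eventually.of_forall fun x => (hr₂int x).const_mul (r₁ x)
    · have h : (fun x => ∫ y, ‖r₁ x * r₂ x y‖ ∂ν) = r₁ := funext fun x => by
        calc ∫ y, ‖r₁ x * r₂ x y‖ ∂ν
            = ∫ y, r₁ x * r₂ x y ∂ν := integral_congr_ae (Filter.Eventually.of_forall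
              fun y => Real.norm_of_nonneg (mul_nonneg (hr₁0 x) (hr₂0 x y)))
          _ = r₁ x * ∫ y, r₂ x y ∂ν := integral_const_mul _ _
          _ = r₁ x := by rw [hr₂dens x, mul_one]
      rw [h]; exact hr₁int
  have hℓint : Integrable (fun z : 𝒳 × 𝒴 => ℓ z * (r₁ z.1 * r₂ z.1 z.2)) (μ.prod ν) :=
    hdint.bdd_mul hℓ.aestronglyMeasurable
      (c := B) (Filter.Eventually.of_forall fun z => by rw [Real.norm_eq_abs, abs_of_nonneg (hbd z).1]; exact (hbd z).2)
  rw [integral_prod _ hℓint]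
  refine integral_congr_ae (Filter.Eventually.of_forall fun x => ?_)
  calc ∫ y, ℓ (x, y) * (r₁ x * r₂ x y) ∂ν
      = ∫ y, r₁ x * (ℓ (x, y) * r₂ x y) ∂ν :=
        integral_congr_ae (Filter.Eventually.of_forall fun y => by ring)
    _ = r₁ x * ∫ y, ℓ (x, y) * r₂ x y ∂ν := integral_const_mul _ _
    _ = (∫ y, ℓ (x, y) * r₂ x y ∂ν) * r₁ x := mul_comm _ _
/-- **Deterministic core of the weak-supervision generalization bound (Claim 1).**
Let `𝒟` and `𝒟hat` be probability measures on `𝒳 × 𝒴` with product-conditional form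
densities `p(x,y) = p₁(x) p₂(y|x)` and `q(x,y) = q₁(x) q₂(y|x)` with respect to `μ ⊗ ν`,
let `ℓ` be a loss bounded in `[0, B]`, and `Rhat` any empirical risk functional. If
(i) `sup_f |Rhat f - R_𝒟hat f| ≤ A`, (ii) the feature marginals satisfy
`d_TV(𝒟hat_X, 𝒟_X) ≤ ε₁`, and (iii) the conditionals satisfy
`d_TV(q₂(·|x), p₂(·|x)) ≤ ε₂` for every `x`, then
`sup_f |Rhat f - R_𝒟 f| ≤ A + B (√(2 ε₁) + √(2 ε₂))`. -/
theorem generalization_bound_core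
    {𝒳 𝒴 F : Type*} [MeasurableSpace 𝒳] [MeasurableSpace 𝒴]
    (μ : Measure 𝒳) (ν : Measure 𝒴) [SigmaFinite μ] [SigmaFinite ν]
    (p₁ q₁ : 𝒳 → ℝ) (p₂ q₂ : 𝒳 → 𝒴 → ℝ)
    (𝒟 𝒟hat : Measure (𝒳 × 𝒴))
    (hp₁meas : Measurable p₁) (hq₁meas : Measurable q₁)
    (hp₂meas : Measurable (Function.uncurry p₂)) (hq₂meas : Measurable (Function.uncurry q₂))
    (hp₁pos : ∀ x, 0 ≤ p₁ x) (hq₁pos : ∀ x, 0 ≤ q₁ x)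
    (hp₂pos : ∀ x y, 0 ≤ p₂ x y) (hq₂pos : ∀ x y, 0 ≤ q₂ x y)
    (hp₁int : Integrable p₁ μ) (hq₁int : Integrable q₁ μ)
    (hp₂int : ∀ x, Integrable (p₂ x) ν) (hq₂int : ∀ x, Integrable (q₂ x) ν)
    (hp₁dens : ∫ x, p₁ x ∂μ = 1) (hq₁dens : ∫ x, q₁ x ∂μ = 1)
    (hp₂dens : ∀ x, ∫ y, p₂ x y ∂ν = 1) (hq₂dens : ∀ x, ∫ y, q₂ x y ∂ν = 1)
    (h𝒟 : 𝒟 = (μ.prod ν).withDensity (fun z => ENNReal.ofReal (p₁ z.1 * p₂ z.1 z.2)))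
    (h𝒟hat : 𝒟hat = (μ.prod ν).withDensity (fun z => ENNReal.ofReal (q₁ z.1 * q₂ z.1 z.2)))
    (ℓ : F → 𝒳 × 𝒴 → ℝ) (B : ℝ) (hB : 0 ≤ B)
    (hmeas : ∀ f, Measurable (ℓ f))
    (hbound : ∀ f z, ℓ f z ∈ Set.Icc 0 B)
    (Rhat : F → ℝ)
    (A ε₁ ε₂ : ℝ) (hA : 0 ≤ A)
    (hε₁0 : 0 ≤ ε₁) (hε₁1 : ε₁ ≤ 1) (hε₂0 : 0 ≤ ε₂) (hε₂1 : ε₂ ≤ 1)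
    (hi : (⨆ f : F, |Rhat f - ∫ z, ℓ f z ∂𝒟hat|) ≤ A)
    (hii : tvDist (μ.withDensity (fun x => ENNReal.ofReal (q₁ x)))
        (μ.withDensity (fun x => ENNReal.ofReal (p₁ x))) ≤ ε₁)
    (hiii : ∀ x, tvDist (ν.withDensity (fun y => ENNReal.ofReal (q₂ x y)))
        (ν.withDensity (fun y => ENNReal.ofReal (p₂ x y))) ≤ ε₂) :
    (⨆ f : F, |Rhat f - ∫ z, ℓ f z ∂𝒟|)
      ≤ A + B * (Real.sqrt (2 * ε₁) + Real.sqrt (2 * ε₂)) := by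

  have hq₂' : Measurable fun z : 𝒳 × 𝒴 => q₂ z.1 z.2 := hq₂meas
  have hp₂' : Measurable fun z : 𝒳 × 𝒴 => p₂ z.1 z.2 := hp₂meas
  -- representations of the risks
  have hIhat : ∀ f, (∫ z, ℓ f z ∂𝒟hat)
      = ∫ x, (∫ y, ℓ f (x, y) * q₂ x y ∂ν) * q₁ x ∂μ := fun f => by
    rw [h𝒟hat]
    exact risk_repr μ ν hq₁meas hq₂meas hq₁pos hq₂pos hq₁int hq₂int hq₂dens (hmeas f) (hbound f)
  have hI : ∀ f, (∫ z, ℓ f z ∂𝒟)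
      = ∫ x, (∫ y, ℓ f (x, y) * p₂ x y ∂ν) * p₁ x ∂μ := fun f => by
    rw [h𝒟]
    exact risk_repr μ ν hp₁meas hp₂meas hp₁pos hp₂pos hp₁int hp₂int hp₂dens (hmeas f) (hbound f)
  -- the key estimate
  have hkey : ∀ f, |(∫ z, ℓ f z ∂𝒟hat) - ∫ z, ℓ f z ∂𝒟| ≤ B * ε₁ + B * ε₂ := by
    intro f
    set Gq : 𝒳 → ℝ := fun x => ∫ y, ℓ f (x, y) * q₂ x y ∂ν with hGq
    set Gp : 𝒳 → ℝ := fun x => ∫ y, ℓ f (x, y) * p₂ x y ∂ν with hGp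
    have hℓx : ∀ x : 𝒳, Measurable fun y => ℓ f (x, y) :=
      fun x => (hmeas f).comp measurable_prodMk_left
    have hℓxbd : ∀ x : 𝒳, ∃ C, ∀ y, ‖ℓ f (x, y)‖ ≤ C := fun x =>
      ⟨B, fun y => by
        rw [Real.norm_eq_abs, abs_of_nonneg (hbound f (x, y)).1]; exact (hbound f (x, y)).2⟩
    have hGqm : Measurable Gq :=
      (((hmeas f).mul hq₂').stronglyMeasurable.integral_prod_right').measurable
    have hGpm : Measurable Gp :=
      (((hmeas f).mul hp₂').stronglyMeasurable.integral_prod_right').measurable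
    have hGqB : ∀ x, Gq x ∈ Set.Icc 0 B := by
      intro x
      have hint : Integrable (fun y => ℓ f (x, y) * q₂ x y) ν :=
        (hq₂int x).bdd_mul (hℓx x).aestronglyMeasurable (Filter.Eventually.of_forall (hℓxbd x).choose_spec)
      constructor
      · exact integral_nonneg fun y => mul_nonneg (hbound f (x, y)).1 (hq₂pos x y)
      · calc ∫ y, ℓ f (x, y) * q₂ x y ∂ν ≤ ∫ y, B * q₂ x y ∂ν :=
            integral_mono hint ((hq₂int x).const_mul B)
              fun y => mul_le_mul_of_nonneg_right (hbound f (x, y)).2 (hq₂pos x y)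
          _ = B := by rw [integral_const_mul, hq₂dens x, mul_one]
    have hGpB : ∀ x, Gp x ∈ Set.Icc 0 B := by
      intro x
      have hint : Integrable (fun y => ℓ f (x, y) * p₂ x y) ν :=
        (hp₂int x).bdd_mul (hℓx x).aestronglyMeasurable (Filter.Eventually.of_forall (hℓxbd x).choose_spec)
      constructor
      · exact integral_nonneg fun y => mul_nonneg (hbound f (x, y)).1 (hp₂pos x y)
      · calc ∫ y, ℓ f (x, y) * p₂ x y ∂ν ≤ ∫ y, B * p₂ x y ∂ν :=
            integral_mono hint ((hp₂int x).const_mul B)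
              fun y => mul_le_mul_of_nonneg_right (hbound f (x, y)).2 (hp₂pos x y)
          _ = B := by rw [integral_const_mul, hp₂dens x, mul_one]
    have term1 : |(∫ x, Gq x * q₁ x ∂μ) - ∫ x, Gq x * p₁ x ∂μ| ≤ B * ε₁ :=
      le_trans
        (abs_integral_mul_sub_le_tv μ hp₁meas hq₁meas hp₁pos hq₁pos hp₁int hq₁int hGqm hB hGqB)
        (mul_le_mul_of_nonneg_left hii hB)
    have hpt : ∀ x, |Gq x - Gp x| ≤ B * ε₂ := by
      intro x
      have hp₂x : Measurable (p₂ x) := hp₂meas.comp measurable_prodMk_left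
      have hq₂x : Measurable (q₂ x) := hq₂meas.comp measurable_prodMk_left
      refine le_trans (abs_integral_mul_sub_le_tv ν hp₂x hq₂x (hp₂pos x) (hq₂pos x)
        (hp₂int x) (hq₂int x) (hℓx x) hB fun y => hbound f (x, y)) ?_
      exact mul_le_mul_of_nonneg_left (hiii x) hB
    have hGq1 : Integrable (fun x => Gq x * p₁ x) μ :=
      hp₁int.bdd_mul hGqm.aestronglyMeasurable
        (c := B) (Filter.Eventually.of_forall fun x => by rw [Real.norm_eq_abs, abs_of_nonneg (hGqB x).1]; exact (hGqB x).2)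
    have hGp1 : Integrable (fun x => Gp x * p₁ x) μ :=
      hp₁int.bdd_mul hGpm.aestronglyMeasurable
        (c := B) (Filter.Eventually.of_forall fun x => by rw [Real.norm_eq_abs, abs_of_nonneg (hGpB x).1]; exact (hGpB x).2)
    have term2 : |(∫ x, Gq x * p₁ x ∂μ) - ∫ x, Gp x * p₁ x ∂μ| ≤ B * ε₂ := by
      rw [← integral_sub hGq1 hGp1]
      have habs : |∫ x, (Gq x * p₁ x - Gp x * p₁ x) ∂μ| ≤ ∫ x, |Gq x * p₁ x - Gp x * p₁ x| ∂μ := by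
        simpa [Real.norm_eq_abs] using
          norm_integral_le_integral_norm (fun x => Gq x * p₁ x - Gp x * p₁ x) (μ := μ)
      refine le_trans habs ?_
      have step : ∫ x, |Gq x * p₁ x - Gp x * p₁ x| ∂μ ≤ ∫ x, (B * ε₂) * p₁ x ∂μ := by
        refine integral_mono (hGq1.sub hGp1).abs (hp₁int.const_mul (B * ε₂)) fun x => ?_
        have h : |Gq x * p₁ x - Gp x * p₁ x| = |Gq x - Gp x| * p₁ x := by
          rw [← sub_mul, abs_mul, abs_of_nonneg (hp₁pos x)]
        rw [h]
        exact mul_le_mul_of_nonneg_right (hpt x) (hp₁pos x)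
      refine le_trans step ?_
      rw [integral_const_mul, hp₁dens, mul_one]
    rw [hIhat f, hI f]
    calc |(∫ x, Gq x * q₁ x ∂μ) - ∫ x, Gp x * p₁ x ∂μ|
        ≤ |(∫ x, Gq x * q₁ x ∂μ) - ∫ x, Gq x * p₁ x ∂μ|
          + |(∫ x, Gq x * p₁ x ∂μ) - ∫ x, Gp x * p₁ x ∂μ| := abs_sub_le _ _ _
      _ ≤ B * ε₁ + B * ε₂ := add_le_add term1 term2
  -- conclusion
  have hRHS0 : 0 ≤ A + B * (Real.sqrt (2 * ε₁) + Real.sqrt (2 * ε₂)) := by positivity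
  rcases isEmpty_or_nonempty F with hF | hF
  · rw [Real.iSup_of_isEmpty]; exact hRHS0
  by_cases hbdd : BddAbove (Set.range fun f => |Rhat f - ∫ z, ℓ f z ∂𝒟|)
  · obtain ⟨M, hM⟩ := hbdd
    have hbdd' : BddAbove (Set.range fun f => |Rhat f - ∫ z, ℓ f z ∂𝒟hat|) := by
      refine ⟨M + (B * ε₁ + B * ε₂), ?_⟩
      rintro _ ⟨f, rfl⟩
      have h1 : |Rhat f - ∫ z, ℓ f z ∂𝒟| ≤ M := hM (Set.mem_range_self f)
      have h2 := hkey f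
      rw [abs_sub_comm] at h2
      calc |Rhat f - ∫ z, ℓ f z ∂𝒟hat|
          ≤ |Rhat f - ∫ z, ℓ f z ∂𝒟| + |(∫ z, ℓ f z ∂𝒟) - ∫ z, ℓ f z ∂𝒟hat| := abs_sub_le _ _ _
        _ ≤ M + (B * ε₁ + B * ε₂) := add_le_add h1 h2
    refine ciSup_le fun f => ?_
    have h1 : |Rhat f - ∫ z, ℓ f z ∂𝒟hat| ≤ A := le_trans (le_ciSup hbdd' f) hi
    have h2 := hkey f
    have e1 := eps_le_sqrt_two_eps hε₁0 hε₁1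
    have e2 := eps_le_sqrt_two_eps hε₂0 hε₂1
    have m1 := mul_le_mul_of_nonneg_left e1 hB
    have m2 := mul_le_mul_of_nonneg_left e2 hB
    calc |Rhat f - ∫ z, ℓ f z ∂𝒟|
        ≤ |Rhat f - ∫ z, ℓ f z ∂𝒟hat| + |(∫ z, ℓ f z ∂𝒟hat) - ∫ z, ℓ f z ∂𝒟| := abs_sub_le _ _ _
      _ ≤ A + (B * ε₁ + B * ε₂) := add_le_add h1 h2
      _ ≤ A + B * (Real.sqrt (2 * ε₁) + Real.sqrt (2 * ε₂)) := by nlinarith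
  · rw [Real.iSup_of_not_bddAbove hbdd]; exact hRHS0
end

section
/- Let P and Q be probability measures on 𝒳 × {0, 1}, where 𝒳 is a measurable space, and let C be a 2 × 2 right-stochastic matrix (nonnegative entries with each row summing to 1) that is invertible. Define the channel-corrupted measures P̃ and Q̃ on 𝒳 × {0, 1} by P̃(A × {j}) = ∑_{i ∈ {0,1}} C_{i,j} · P(A × {i}) for every measurable A ⊆ 𝒳 and j ∈ {0, 1}, and analogously for Q̃. Then d_TV(P̃, Q̃) ≤ d_TV(P, Q) ≤ ‖C^{-1}‖_∞ · d_TV(P̃, Q̃), where ‖C^{-1}‖_∞ = max_i ∑_j |(C^{-1})_{i,j}| is the ∞-operator norm of C^{-1}. -/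
open MeasureTheory Matrix

/-- The ∞-operator norm of a `2 × 2` real matrix: the maximum absolute row sum. -/
noncomputable def linftyNorm (M : Matrix (Fin 2) (Fin 2) ℝ) : ℝ :=
  Finset.univ.sup' Finset.univ_nonempty (fun i => ∑ j, |M i j|)

/-- `Ptil` is the label-corrupted version of `P` through the noisy channel with
transition matrix `C`: `Ptil(A × {j}) = ∑ i, C i j * P(A × {i})` for every measurable
`A` and label `j`. -/
def IsChannelCorrupted {𝒳 : Type*} [MeasurableSpace 𝒳] (C : Matrix (Fin 2) (Fin 2) ℝ)
    (P Ptil : Measure (𝒳 × Fin 2)) : Prop :=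
  ∀ A : Set 𝒳, MeasurableSet A → ∀ j : Fin 2,
    Ptil (A ×ˢ ({j} : Set (Fin 2))) =
      ∑ i : Fin 2, ENNReal.ofReal (C i j) * P (A ×ˢ ({i} : Set (Fin 2)))

set_option linter.unusedSectionVars false


section Core
variable {X : Type*} [MeasurableSpace X] (μ ν : Measure X)

lemma tv_bdd (hμ : μ Set.univ ≠ ⊤) (hν : ν Set.univ ≠ ⊤) :
    BddAbove (Set.range fun A : {A : Set X // MeasurableSet A} =>
      |(μ A.1).toReal - (ν A.1).toReal|) := by
  refine ⟨(μ Set.univ).toReal + (ν Set.univ).toReal, ?_⟩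
  rintro x ⟨A, rfl⟩
  have h1 : (μ A.1).toReal ≤ (μ Set.univ).toReal :=
    ENNReal.toReal_mono hμ (measure_mono (Set.subset_univ _))
  have h2 : (ν A.1).toReal ≤ (ν Set.univ).toReal :=
    ENNReal.toReal_mono hν (measure_mono (Set.subset_univ _))
  have := ENNReal.toReal_nonneg (a := μ A.1)
  have := ENNReal.toReal_nonneg (a := ν A.1)
  rw [abs_le]; constructor <;> nlinarith

lemma abs_le_tvDist (hμ : μ Set.univ ≠ ⊤) (hν : ν Set.univ ≠ ⊤)
    {A : Set X} (hA : MeasurableSet A) :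
    |(μ A).toReal - (ν A).toReal| ≤ tvDist μ ν :=
  le_ciSup (tv_bdd μ ν hμ hν) ⟨A, hA⟩

lemma tvDist_nonneg (hμ : μ Set.univ ≠ ⊤) (hν : ν Set.univ ≠ ⊤) :
    0 ≤ tvDist μ ν := by
  have := abs_le_tvDist μ ν hμ hν MeasurableSet.empty
  simpa using this

lemma tvDist_comm_s10 : tvDist μ ν = tvDist ν μ := by
  simp [tvDist, abs_sub_comm]

lemma core_lemma {ι : Type*} [Fintype ι]
    (hμ : μ Set.univ ≠ ⊤) (hν : ν Set.univ ≠ ⊤) (htot : μ Set.univ = ν Set.univ)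
    (E : ι → Set X) (hE : ∀ k, MeasurableSet (E k))
    (hdisj : Pairwise (Function.onFun Disjoint E)) (hcov : ⋃ k, E k = Set.univ)
    (c : ι → ℝ) (r : ℝ) (hr : 0 ≤ r) (hc : ∀ k, |c k - 1/2| ≤ r/2) :
    ∑ k, c k * ((μ (E k)).toReal - (ν (E k)).toReal) ≤ r * tvDist μ ν := by
  have hμf : ∀ (A : Set X), μ A ≠ ⊤ := fun A =>
    (lt_of_le_of_lt (measure_mono (Set.subset_univ _)) (lt_top_iff_ne_top.2 hμ)).ne
  have hνf : ∀ (A : Set X), ν A ≠ ⊤ := fun A =>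
    (lt_of_le_of_lt (measure_mono (Set.subset_univ _)) (lt_top_iff_ne_top.2 hν)).ne
  set δ : ι → ℝ := fun k => (μ (E k)).toReal - (ν (E k)).toReal with hδ
  have hbi : ∀ (F : Finset ι) (m : Measure X),
      m (⋃ k ∈ F, E k) = ∑ k ∈ F, m (E k) := by
    intro F m
    exact measure_biUnion_finset (fun i _ j _ hij => hdisj hij) (fun k _ => hE k)
  have key : ∀ F : Finset ι, |∑ k ∈ F, δ k| ≤ tvDist μ ν := by
    intro F
    have h1 : ∑ k ∈ F, δ k = (μ (⋃ k ∈ F, E k)).toReal - (ν (⋃ k ∈ F, E k)).toReal := by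
      rw [hbi F μ, hbi F ν, ENNReal.toReal_sum (fun k _ => hμf _),
        ENNReal.toReal_sum (fun k _ => hνf _), Finset.sum_sub_distrib]
    rw [h1]
    exact abs_le_tvDist μ ν hμ hν (Finset.measurableSet_biUnion F (fun k _ => hE k))
  have hsum : ∑ k, δ k = 0 := by
    have h1 : ∑ k ∈ Finset.univ, δ k =
        (μ (⋃ k ∈ Finset.univ, E k)).toReal - (ν (⋃ k ∈ Finset.univ, E k)).toReal := by
      rw [hbi _ μ, hbi _ ν, ENNReal.toReal_sum (fun k _ => hμf _),
        ENNReal.toReal_sum (fun k _ => hνf _), Finset.sum_sub_distrib]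
    have h2 : (⋃ k ∈ (Finset.univ : Finset ι), E k) = Set.univ := by
      rw [← hcov]; simp
    rw [h1, h2, htot, sub_self]
  have habs : ∑ k, |δ k| ≤ 2 * tvDist μ ν := by
    classical
    set F : Finset ι := Finset.univ.filter (fun k => 0 ≤ δ k) with hF
    set G : Finset ι := Finset.univ.filter (fun k => ¬ 0 ≤ δ k) with hG
    have hsplit : ∑ k, |δ k| = (∑ k ∈ F, δ k) - ∑ k ∈ G, δ k := by
      rw [← Finset.sum_filter_add_sum_filter_not Finset.univ (fun k => 0 ≤ δ k) (fun k => |δ k|)]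
      rw [Finset.sum_congr rfl (fun k hk => abs_of_nonneg (Finset.mem_filter.1 hk).2),
        Finset.sum_congr rfl (fun k hk => abs_of_neg (lt_of_not_ge (Finset.mem_filter.1 hk).2))]
      rw [Finset.sum_neg_distrib]; ring
    rw [hsplit]
    have k1 := (abs_le.1 (key F)).2
    have k2 := (abs_le.1 (key G)).1
    linarith
  calc ∑ k, c k * δ k = ∑ k, (c k - 1/2) * δ k + (1/2) * ∑ k, δ k := by
        rw [Finset.mul_sum, ← Finset.sum_add_distrib]; congr 1; ext k; ring
    _ = ∑ k, (c k - 1/2) * δ k := by rw [hsum]; ring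
    _ ≤ ∑ k, (r/2) * |δ k| := by
        refine Finset.sum_le_sum (fun k _ => ?_)
        calc (c k - 1/2) * δ k ≤ |(c k - 1/2) * δ k| := le_abs_self _
          _ = |c k - 1/2| * |δ k| := abs_mul _ _
          _ ≤ (r/2) * |δ k| := mul_le_mul_of_nonneg_right (hc k) (abs_nonneg _)
    _ = (r/2) * ∑ k, |δ k| := by rw [Finset.mul_sum]
    _ ≤ (r/2) * (2 * tvDist μ ν) := by
        refine mul_le_mul_of_nonneg_left habs (by linarith)
    _ = r * tvDist μ ν := by ring

end Core

section Decomp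
variable {𝒳 : Type*} [MeasurableSpace 𝒳]

/-- section of S at label i -/
def sec (S : Set (𝒳 × Fin 2)) (i : Fin 2) : Set 𝒳 := {x | (x, i) ∈ S}

lemma sec_meas {S : Set (𝒳 × Fin 2)} (hS : MeasurableSet S) (i : Fin 2) :
    MeasurableSet (sec S i) := hS.preimage measurable_prodMk_right

def Tset (S₀ S₁ : Set 𝒳) (a b : Bool) : Set 𝒳 :=
  (if a then S₀ else S₀ᶜ) ∩ (if b then S₁ else S₁ᶜ)

lemma Tset_meas {S₀ S₁ : Set 𝒳} (h0 : MeasurableSet S₀) (h1 : MeasurableSet S₁)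
    (a b : Bool) : MeasurableSet (Tset S₀ S₁ a b) := by
  cases a <;> cases b <;>
    simp only [Tset, if_true, if_false, Bool.false_eq_true] <;>
    exact MeasurableSet.inter (by first | exact h0 | exact h0.compl)
      (by first | exact h1 | exact h1.compl)

def Eatom (S₀ S₁ : Set 𝒳) (p : Bool × Bool × Fin 2) : Set (𝒳 × Fin 2) :=
  Tset S₀ S₁ p.1 p.2.1 ×ˢ ({p.2.2} : Set (Fin 2))

lemma Eatom_meas {S₀ S₁ : Set 𝒳} (h0 : MeasurableSet S₀) (h1 : MeasurableSet S₁)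
    (p : Bool × Bool × Fin 2) : MeasurableSet (Eatom S₀ S₁ p) :=
  (Tset_meas h0 h1 _ _).prod (MeasurableSet.singleton _)

lemma mem_Tset {S₀ S₁ : Set 𝒳} {x : 𝒳} {a b : Bool} :
    x ∈ Tset S₀ S₁ a b ↔ ((x ∈ S₀ ↔ a = true) ∧ (x ∈ S₁ ↔ b = true)) := by
  cases a <;> cases b <;> simp [Tset]

lemma Eatom_disj (S₀ S₁ : Set 𝒳) :
    Pairwise (Function.onFun Disjoint (Eatom S₀ S₁)) := by
  rintro ⟨a, b, i⟩ ⟨a', b', i'⟩ hne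
  rw [Function.onFun, Set.disjoint_left]
  rintro ⟨x, j⟩ ⟨hT, hj⟩ ⟨hT', hj'⟩
  simp only [Set.mem_singleton_iff] at hj hj'
  simp only [mem_Tset] at hT hT'
  apply hne
  have ha : a = a' := by
    have := hT.1.symm.trans hT'.1
    cases a <;> cases a' <;> simp_all
  have hb : b = b' := by
    have := hT.2.symm.trans hT'.2
    cases b <;> cases b' <;> simp_all
  have hi : i = i' := hj ▸ hj'
  rw [ha, hb, hi]

lemma Eatom_cov (S₀ S₁ : Set 𝒳) : ⋃ p, Eatom S₀ S₁ p = Set.univ := by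
  rw [Set.eq_univ_iff_forall]
  rintro ⟨x, j⟩
  rw [Set.mem_iUnion]
  classical
  refine ⟨⟨decide (x ∈ S₀), decide (x ∈ S₁), j⟩, ?_, rfl⟩
  rw [mem_Tset]
  simp

lemma sec_eq_union (S₀ S₁ : Set 𝒳) :
    S₀ = Tset S₀ S₁ true true ∪ Tset S₀ S₁ true false ∧
    S₁ = Tset S₀ S₁ true true ∪ Tset S₀ S₁ false true := by
  constructor <;>
  · ext x
    simp only [Set.mem_union, mem_Tset]
    by_cases h0 : x ∈ S₀ <;> by_cases h1 : x ∈ S₁ <;> simp [h0, h1]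

lemma S_decomp {S : Set (𝒳 × Fin 2)} :
    S = (sec S 0) ×ˢ ({0} : Set (Fin 2)) ∪ (sec S 1) ×ˢ ({1} : Set (Fin 2)) := by
  ext ⟨x, j⟩
  fin_cases j <;> simp [sec]

lemma disj_labels (A B : Set 𝒳) :
    Disjoint (A ×ˢ ({0} : Set (Fin 2))) (B ×ˢ ({1} : Set (Fin 2))) := by
  rw [Set.disjoint_left]
  rintro ⟨x, j⟩ ⟨-, h0⟩ ⟨-, h1⟩
  simp only [Set.mem_singleton_iff] at h0 h1
  rw [h0] at h1; exact absurd h1 (by decide)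

end Decomp
section Chan
variable {𝒳 : Type*} [MeasurableSpace 𝒳] (C : Matrix (Fin 2) (Fin 2) ℝ)
  (m mtil : Measure (𝒳 × Fin 2))

lemma corrupt_ne_top (hm : ∀ A, m A ≠ ⊤) (hch : IsChannelCorrupted C m mtil)
    {A : Set 𝒳} (hA : MeasurableSet A) (j : Fin 2) :
    mtil (A ×ˢ ({j} : Set (Fin 2))) ≠ ⊤ := by
  rw [hch A hA j]
  exact ENNReal.sum_ne_top.2 fun i _ => ENNReal.mul_ne_top ENNReal.ofReal_ne_top (hm _)

lemma channel_toReal (hCpos : ∀ i j, 0 ≤ C i j) (hm : ∀ A, m A ≠ ⊤)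
    (hch : IsChannelCorrupted C m mtil) {A : Set 𝒳} (hA : MeasurableSet A) (j : Fin 2) :
    (mtil (A ×ˢ ({j} : Set (Fin 2)))).toReal =
      ∑ i, C i j * (m (A ×ˢ ({i} : Set (Fin 2)))).toReal := by
  rw [hch A hA j, ENNReal.toReal_sum
    (fun i _ => ENNReal.mul_ne_top ENNReal.ofReal_ne_top (hm _))]
  exact Finset.sum_congr rfl fun i _ => by
    rw [ENNReal.toReal_mul, ENNReal.toReal_ofReal (hCpos i j)]

lemma inverse_toReal (hCpos : ∀ i j, 0 ≤ C i j) (hCunit : IsUnit C)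
    (hm : ∀ A, m A ≠ ⊤) (hch : IsChannelCorrupted C m mtil)
    {A : Set 𝒳} (hA : MeasurableSet A) (i : Fin 2) :
    (m (A ×ˢ ({i} : Set (Fin 2)))).toReal =
      ∑ j, C⁻¹ j i * (mtil (A ×ˢ ({j} : Set (Fin 2)))).toReal := by
  have hdet : IsUnit C.det := (Matrix.isUnit_iff_isUnit_det C).1 hCunit
  have hCC : C * C⁻¹ = 1 := Matrix.mul_nonsing_inv C hdet
  symm
  calc ∑ j, C⁻¹ j i * (mtil (A ×ˢ ({j} : Set (Fin 2)))).toReal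
      = ∑ j, C⁻¹ j i * ∑ i', C i' j * (m (A ×ˢ ({i'} : Set (Fin 2)))).toReal := by
        refine Finset.sum_congr rfl fun j _ => ?_
        rw [channel_toReal C m mtil hCpos hm hch hA j]
    _ = ∑ j, ∑ i', (C i' j * C⁻¹ j i) * (m (A ×ˢ ({i'} : Set (Fin 2)))).toReal := by
        refine Finset.sum_congr rfl fun j _ => ?_
        rw [Finset.mul_sum]; exact Finset.sum_congr rfl fun i' _ => by ring
    _ = ∑ i', (∑ j, C i' j * C⁻¹ j i) * (m (A ×ˢ ({i'} : Set (Fin 2)))).toReal := by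
        rw [Finset.sum_comm]
        exact Finset.sum_congr rfl fun i' _ => by rw [Finset.sum_mul]
    _ = ∑ i', (1 : Matrix (Fin 2) (Fin 2) ℝ) i' i * (m (A ×ˢ ({i'} : Set (Fin 2)))).toReal := by
        refine Finset.sum_congr rfl fun i' _ => ?_
        rw [← Matrix.mul_apply, hCC]
    _ = (m (A ×ˢ ({i} : Set (Fin 2)))).toReal := by
        rw [Fin.sum_univ_two]
        fin_cases i <;> simp [Matrix.one_apply]

lemma inv_row_sum (hCrow : ∀ i, ∑ j, C i j = 1) (hCunit : IsUnit C) (j : Fin 2) :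
    ∑ i, C⁻¹ j i = 1 := by
  have hdet : IsUnit C.det := (Matrix.isUnit_iff_isUnit_det C).1 hCunit
  have hCC : C⁻¹ * C = 1 := Matrix.nonsing_inv_mul C hdet
  calc ∑ i, C⁻¹ j i = ∑ i, C⁻¹ j i * ∑ k, C i k := by
        refine Finset.sum_congr rfl fun i _ => by rw [hCrow i, mul_one]
    _ = ∑ k, ∑ i, C⁻¹ j i * C i k := by
        simp_rw [Finset.mul_sum]; rw [Finset.sum_comm]
    _ = ∑ k, (C⁻¹ * C) j k := by simp [Matrix.mul_apply]
    _ = 1 := by rw [hCC]; simp [Matrix.one_apply, Fin.sum_univ_two]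

end Chan
section Main
variable {𝒳 : Type*} [MeasurableSpace 𝒳] (C : Matrix (Fin 2) (Fin 2) ℝ)

lemma Tset_disjoint {S₀ S₁ : Set 𝒳} {a b a' b' : Bool} (h : (a, b) ≠ (a', b')) :
    Disjoint (Tset S₀ S₁ a b) (Tset S₀ S₁ a' b') := by
  rw [Set.disjoint_left]
  intro x hx hx'
  rw [mem_Tset] at hx hx'
  apply h
  have ha : a = a' := by have := hx.1.symm.trans hx'.1; cases a <;> cases a' <;> simp_all
  have hb : b = b' := by have := hx.2.symm.trans hx'.2; cases b <;> cases b' <;> simp_all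
  rw [ha, hb]

lemma prod_split (m : Measure (𝒳 × Fin 2)) (hm : ∀ A, m A ≠ ⊤) {A B : Set 𝒳}
    (hB : MeasurableSet B) (hd : Disjoint A B) (j : Fin 2) :
    (m ((A ∪ B) ×ˢ ({j} : Set (Fin 2)))).toReal =
      (m (A ×ˢ ({j} : Set (Fin 2)))).toReal + (m (B ×ˢ ({j} : Set (Fin 2)))).toReal := by
  rw [Set.union_prod, measure_union (Set.Disjoint.set_prod_left hd _ _) (hB.prod (MeasurableSet.singleton _)),
    ENNReal.toReal_add (hm _) (hm _)]

lemma corrupted_sum (hCpos : ∀ i j, 0 ≤ C i j) (m mtil : Measure (𝒳 × Fin 2))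
    (hm : ∀ A, m A ≠ ⊤) (hch : IsChannelCorrupted C m mtil)
    {S : Set (𝒳 × Fin 2)} (hS : MeasurableSet S) :
    (mtil S).toReal = ∑ p : Bool × Bool × Fin 2,
      ((if p.1 then C p.2.2 0 else 0) + (if p.2.1 then C p.2.2 1 else 0)) *
        (m (Eatom (sec S 0) (sec S 1) p)).toReal := by
  set S₀ := sec S 0 with hS0
  set S₁ := sec S 1 with hS1
  have m0 : MeasurableSet S₀ := sec_meas hS 0
  have m1 : MeasurableSet S₁ := sec_meas hS 1
  have hx0 : ∀ i : Fin 2, (m (S₀ ×ˢ ({i} : Set (Fin 2)))).toReal =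
      (m (Tset S₀ S₁ true true ×ˢ ({i} : Set (Fin 2)))).toReal +
      (m (Tset S₀ S₁ true false ×ˢ ({i} : Set (Fin 2)))).toReal := by
    intro i
    rw [show S₀ ×ˢ ({i} : Set (Fin 2)) =
        (Tset S₀ S₁ true true ∪ Tset S₀ S₁ true false) ×ˢ ({i} : Set (Fin 2)) from by
      rw [← (sec_eq_union S₀ S₁).1]]
    exact prod_split m hm (Tset_meas m0 m1 _ _) (Tset_disjoint (by decide)) i
  have hx1 : ∀ i : Fin 2, (m (S₁ ×ˢ ({i} : Set (Fin 2)))).toReal =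
      (m (Tset S₀ S₁ true true ×ˢ ({i} : Set (Fin 2)))).toReal +
      (m (Tset S₀ S₁ false true ×ˢ ({i} : Set (Fin 2)))).toReal := by
    intro i
    rw [show S₁ ×ˢ ({i} : Set (Fin 2)) =
        (Tset S₀ S₁ true true ∪ Tset S₀ S₁ false true) ×ˢ ({i} : Set (Fin 2)) from by
      rw [← (sec_eq_union S₀ S₁).2]]
    exact prod_split m hm (Tset_meas m0 m1 _ _) (Tset_disjoint (by decide)) i
  calc (mtil S).toReal
      = (mtil (S₀ ×ˢ ({0} : Set (Fin 2)))).toReal +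
        (mtil (S₁ ×ˢ ({1} : Set (Fin 2)))).toReal := by
        conv_lhs => rw [S_decomp (S := S)]
        rw [measure_union (disj_labels _ _) (m1.prod (MeasurableSet.singleton _)),
          ENNReal.toReal_add (corrupt_ne_top C m mtil hm hch m0 0)
            (corrupt_ne_top C m mtil hm hch m1 1)]
    _ = (∑ i, C i 0 * (m (S₀ ×ˢ ({i} : Set (Fin 2)))).toReal) +
        (∑ i, C i 1 * (m (S₁ ×ˢ ({i} : Set (Fin 2)))).toReal) := by
        rw [channel_toReal C m mtil hCpos hm hch m0 0,
          channel_toReal C m mtil hCpos hm hch m1 1]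
    _ = _ := by
        simp only [hx0, hx1, Fin.sum_univ_two, Fintype.sum_prod_type, Fintype.sum_bool, Eatom]
        simp only [if_true, Bool.false_eq_true, if_false]
        ring

lemma inverse_sum (hCpos : ∀ i j, 0 ≤ C i j) (hCunit : IsUnit C)
    (m mtil : Measure (𝒳 × Fin 2))
    (hm : ∀ A, m A ≠ ⊤) (hmt : ∀ A, mtil A ≠ ⊤) (hch : IsChannelCorrupted C m mtil)
    {S : Set (𝒳 × Fin 2)} (hS : MeasurableSet S) :
    (m S).toReal = ∑ p : Bool × Bool × Fin 2,
      ((if p.1 then C⁻¹ p.2.2 0 else 0) + (if p.2.1 then C⁻¹ p.2.2 1 else 0)) *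
        (mtil (Eatom (sec S 0) (sec S 1) p)).toReal := by
  set S₀ := sec S 0 with hS0
  set S₁ := sec S 1 with hS1
  have m0 : MeasurableSet S₀ := sec_meas hS 0
  have m1 : MeasurableSet S₁ := sec_meas hS 1
  have hx0 : ∀ j : Fin 2, (mtil (S₀ ×ˢ ({j} : Set (Fin 2)))).toReal =
      (mtil (Tset S₀ S₁ true true ×ˢ ({j} : Set (Fin 2)))).toReal +
      (mtil (Tset S₀ S₁ true false ×ˢ ({j} : Set (Fin 2)))).toReal := by
    intro j
    rw [show S₀ ×ˢ ({j} : Set (Fin 2)) =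
        (Tset S₀ S₁ true true ∪ Tset S₀ S₁ true false) ×ˢ ({j} : Set (Fin 2)) from by
      rw [← (sec_eq_union S₀ S₁).1]]
    exact prod_split mtil hmt (Tset_meas m0 m1 _ _) (Tset_disjoint (by decide)) j
  have hx1 : ∀ j : Fin 2, (mtil (S₁ ×ˢ ({j} : Set (Fin 2)))).toReal =
      (mtil (Tset S₀ S₁ true true ×ˢ ({j} : Set (Fin 2)))).toReal +
      (mtil (Tset S₀ S₁ false true ×ˢ ({j} : Set (Fin 2)))).toReal := by
    intro j
    rw [show S₁ ×ˢ ({j} : Set (Fin 2)) =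
        (Tset S₀ S₁ true true ∪ Tset S₀ S₁ false true) ×ˢ ({j} : Set (Fin 2)) from by
      rw [← (sec_eq_union S₀ S₁).2]]
    exact prod_split mtil hmt (Tset_meas m0 m1 _ _) (Tset_disjoint (by decide)) j
  calc (m S).toReal
      = (m (S₀ ×ˢ ({0} : Set (Fin 2)))).toReal +
        (m (S₁ ×ˢ ({1} : Set (Fin 2)))).toReal := by
        conv_lhs => rw [S_decomp (S := S)]
        rw [measure_union (disj_labels _ _) (m1.prod (MeasurableSet.singleton _)),
          ENNReal.toReal_add (hm _) (hm _)]
    _ = (∑ j, C⁻¹ j 0 * (mtil (S₀ ×ˢ ({j} : Set (Fin 2)))).toReal) +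
        (∑ j, C⁻¹ j 1 * (mtil (S₁ ×ˢ ({j} : Set (Fin 2)))).toReal) := by
        rw [inverse_toReal C m mtil hCpos hCunit hm hch m0 0,
          inverse_toReal C m mtil hCpos hCunit hm hch m1 1]
    _ = _ := by
        simp only [hx0, hx1, Fin.sum_univ_two, Fintype.sum_prod_type, Fintype.sum_bool, Eatom]
        simp only [if_true, Bool.false_eq_true, if_false]
        ring

end Main

/-- **Multiplicative approximation bound for label-corrupted distributions (RCGAN).**
If `P̃` and `Q̃` are obtained from probability measures `P` and `Q` on `𝒳 × {0,1}` by
passing the label through a noisy channel with invertible right-stochastic transition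
matrix `C`, then `d_TV(P̃, Q̃) ≤ d_TV(P, Q) ≤ ‖C⁻¹‖_∞ * d_TV(P̃, Q̃)`. -/
theorem tvDist_corrupted_multiplicative
    {𝒳 : Type*} [MeasurableSpace 𝒳]
    (C : Matrix (Fin 2) (Fin 2) ℝ)
    (hCpos : ∀ i j, 0 ≤ C i j) (hCrow : ∀ i, ∑ j, C i j = 1)
    (hCunit : IsUnit C)
    (P Q Ptil Qtil : Measure (𝒳 × Fin 2))
    [IsProbabilityMeasure P] [IsProbabilityMeasure Q]
    (hP : IsChannelCorrupted C P Ptil) (hQ : IsChannelCorrupted C Q Qtil) :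
    tvDist Ptil Qtil ≤ tvDist P Q ∧ tvDist P Q ≤ linftyNorm C⁻¹ * tvDist Ptil Qtil := by
  classical
  haveI : Nonempty {A : Set (𝒳 × Fin 2) // MeasurableSet A} := ⟨⟨∅, MeasurableSet.empty⟩⟩
  have hPfin : ∀ A : Set (𝒳 × Fin 2), P A ≠ ⊤ := fun A => measure_ne_top P A
  have hQfin : ∀ A : Set (𝒳 × Fin 2), Q A ≠ ⊤ := fun A => measure_ne_top Q A
  have univ_decomp : (Set.univ : Set (𝒳 × Fin 2)) =
      (Set.univ ×ˢ ({0} : Set (Fin 2))) ∪ (Set.univ ×ˢ ({1} : Set (Fin 2))) := by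
    ext ⟨x, j⟩; fin_cases j <;> simp
  have hone : ∀ i : Fin 2, ENNReal.ofReal (C i 0) + ENNReal.ofReal (C i 1) = 1 := by
    intro i
    rw [← ENNReal.ofReal_add (hCpos i 0) (hCpos i 1)]
    have h := hCrow i
    rw [Fin.sum_univ_two] at h
    rw [h, ENNReal.ofReal_one]
  have huniv1 : ∀ (m mtil : Measure (𝒳 × Fin 2)), IsProbabilityMeasure m →
      IsChannelCorrupted C m mtil → mtil Set.univ = 1 := by
    intro m mtil hm hch
    have hmU : m (Set.univ ×ˢ ({0} : Set (Fin 2))) + m (Set.univ ×ˢ ({1} : Set (Fin 2))) = 1 := by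
      rw [← measure_union (disj_labels _ _)
        (MeasurableSet.univ.prod (MeasurableSet.singleton _)), ← univ_decomp, measure_univ]
    conv_lhs => rw [univ_decomp]
    rw [measure_union (disj_labels _ _) (MeasurableSet.univ.prod (MeasurableSet.singleton _)),
      hch _ MeasurableSet.univ 0, hch _ MeasurableSet.univ 1, Fin.sum_univ_two, Fin.sum_univ_two]
    calc ENNReal.ofReal (C 0 0) * m (Set.univ ×ˢ ({0} : Set (Fin 2))) +
          ENNReal.ofReal (C 1 0) * m (Set.univ ×ˢ ({1} : Set (Fin 2))) +
          (ENNReal.ofReal (C 0 1) * m (Set.univ ×ˢ ({0} : Set (Fin 2))) +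
          ENNReal.ofReal (C 1 1) * m (Set.univ ×ˢ ({1} : Set (Fin 2))))
        = (ENNReal.ofReal (C 0 0) + ENNReal.ofReal (C 0 1)) *
            m (Set.univ ×ˢ ({0} : Set (Fin 2))) +
          (ENNReal.ofReal (C 1 0) + ENNReal.ofReal (C 1 1)) *
            m (Set.univ ×ˢ ({1} : Set (Fin 2))) := by ring
      _ = 1 := by rw [hone 0, hone 1, one_mul, one_mul, hmU]
  have hPtil1 : Ptil Set.univ = 1 := huniv1 P Ptil inferInstance hP
  have hQtil1 : Qtil Set.univ = 1 := huniv1 Q Qtil inferInstance hQ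
  have hPtfin : ∀ A : Set (𝒳 × Fin 2), Ptil A ≠ ⊤ := by
    intro A
    refine ne_top_of_le_ne_top ?_ (measure_mono (Set.subset_univ A))
    rw [hPtil1]; exact ENNReal.one_ne_top
  have hQtfin : ∀ A : Set (𝒳 × Fin 2), Qtil A ≠ ⊤ := by
    intro A
    refine ne_top_of_le_ne_top ?_ (measure_mono (Set.subset_univ A))
    rw [hQtil1]; exact ENNReal.one_ne_top
  set r : ℝ := linftyNorm C⁻¹ with hr_def
  have hr_row : ∀ j : Fin 2, |C⁻¹ j 0| + |C⁻¹ j 1| ≤ r := by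
    intro j
    have h := Finset.le_sup' (fun i => ∑ j', |C⁻¹ i j'|) (Finset.mem_univ j)
    rw [Fin.sum_univ_two] at h
    exact h
  have hrow1 : ∀ j : Fin 2, C⁻¹ j 0 + C⁻¹ j 1 = 1 := by
    intro j
    have h := inv_row_sum C hCrow hCunit j
    rwa [Fin.sum_univ_two] at h
  have hr1 : (1 : ℝ) ≤ r := by
    have h := hr_row 0
    have h2 := hrow1 0
    nlinarith [le_abs_self (C⁻¹ 0 0), le_abs_self (C⁻¹ 0 1)]
  have hr0 : (0 : ℝ) ≤ r := by linarith
  -- coefficient bounds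
  have hc1 : ∀ p : Bool × Bool × Fin 2,
      |((if p.1 then C p.2.2 0 else 0) + (if p.2.1 then C p.2.2 1 else 0)) - 1/2|
        ≤ (1 : ℝ)/2 := by
    rintro ⟨a, b, i⟩
    have h := hCrow i
    rw [Fin.sum_univ_two] at h
    have h0 := hCpos i 0
    have h1 := hCpos i 1
    cases a <;> cases b <;>
      simp only [if_true, Bool.false_eq_true, if_false, add_zero, zero_add] <;>
      rw [abs_le] <;> constructor <;> linarith
  have hc2 : ∀ p : Bool × Bool × Fin 2,
      |((if p.1 then C⁻¹ p.2.2 0 else 0) + (if p.2.1 then C⁻¹ p.2.2 1 else 0)) - 1/2|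
        ≤ r/2 := by
    rintro ⟨a, b, j⟩
    have h := hr_row j
    have h2 := hrow1 j
    cases a <;> cases b <;>
      simp only [if_true, Bool.false_eq_true, if_false, add_zero, zero_add] <;>
      rw [abs_le] <;> constructor <;>
      nlinarith [le_abs_self (C⁻¹ j 0), neg_abs_le (C⁻¹ j 0),
        le_abs_self (C⁻¹ j 1), neg_abs_le (C⁻¹ j 1)]
  constructor
  · -- first inequality
    refine ciSup_le ?_
    rintro ⟨S, hS⟩
    rw [abs_le]
    have key : ∀ (m mt n nt : Measure (𝒳 × Fin 2)), IsProbabilityMeasure m →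
        IsProbabilityMeasure n → IsChannelCorrupted C m mt → IsChannelCorrupted C n nt →
        (mt S).toReal - (nt S).toReal ≤ tvDist m n := by
      intro m mt n nt hm hn hchm hchn
      have hmf : ∀ A : Set (𝒳 × Fin 2), m A ≠ ⊤ := fun A => measure_ne_top m A
      have hnf : ∀ A : Set (𝒳 × Fin 2), n A ≠ ⊤ := fun A => measure_ne_top n A
      rw [corrupted_sum C hCpos m mt hmf hchm hS, corrupted_sum C hCpos n nt hnf hchn hS,
        ← Finset.sum_sub_distrib]
      simp_rw [← mul_sub]
      have := core_lemma m n (hmf _) (hnf _) (by rw [measure_univ, measure_univ])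
        (Eatom (sec S 0) (sec S 1))
        (Eatom_meas (sec_meas hS 0) (sec_meas hS 1))
        (Eatom_disj _ _) (Eatom_cov _ _)
        (fun p => (if p.1 then C p.2.2 0 else 0) + (if p.2.1 then C p.2.2 1 else 0))
        1 zero_le_one hc1
      linarith
    constructor
    · have h1 := key Q Qtil P Ptil inferInstance inferInstance hQ hP
      rw [tvDist_comm_s10] at h1
      linarith
    · exact key P Ptil Q Qtil inferInstance inferInstance hP hQ
  · -- second inequality
    refine ciSup_le ?_
    rintro ⟨S, hS⟩
    rw [abs_le]
    have key : ∀ (m mt n nt : Measure (𝒳 × Fin 2)), IsProbabilityMeasure m →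
        IsProbabilityMeasure n → (∀ A, mt A ≠ ⊤) → (∀ A, nt A ≠ ⊤) →
        (mt Set.univ = nt Set.univ) →
        IsChannelCorrupted C m mt → IsChannelCorrupted C n nt →
        (m S).toReal - (n S).toReal ≤ r * tvDist mt nt := by
      intro m mt n nt hm hn hmtf hntf htot hchm hchn
      have hmf : ∀ A : Set (𝒳 × Fin 2), m A ≠ ⊤ := fun A => measure_ne_top m A
      have hnf : ∀ A : Set (𝒳 × Fin 2), n A ≠ ⊤ := fun A => measure_ne_top n A
      rw [inverse_sum C hCpos hCunit m mt hmf hmtf hchm hS,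
        inverse_sum C hCpos hCunit n nt hnf hntf hchn hS, ← Finset.sum_sub_distrib]
      simp_rw [← mul_sub]
      exact core_lemma mt nt (hmtf _) (hntf _) htot
        (Eatom (sec S 0) (sec S 1))
        (Eatom_meas (sec_meas hS 0) (sec_meas hS 1))
        (Eatom_disj _ _) (Eatom_cov _ _)
        (fun p => (if p.1 then C⁻¹ p.2.2 0 else 0) + (if p.2.1 then C⁻¹ p.2.2 1 else 0))
        r hr0 hc2
    constructor
    · have h1 := key Q Qtil P Ptil inferInstance inferInstance hQtfin hPtfin
        (hQtil1.trans hPtil1.symm) hQ hP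
      rw [tvDist_comm_s10] at h1
      linarith
    · exact key P Ptil Q Qtil inferInstance inferInstance hPtfin hQtfin
        (hPtil1.trans hQtil1.symm) hP hQ
end

section
/- Let 𝒳 be a measurable space and P, Q probability measures on 𝒳 × {0, 1}. Let ε_λ ∈ (0, 1/2), let m be a real number with m ≥ log(1/ε_λ) / (2(1/2 − ε_λ)²), and let ε_MV ∈ (0, 1/2) satisfy ε_MV ≤ exp(−2m(1/2 − ε_λ)²). Let C_{ε_MV} = [[1 − ε_MV, ε_MV], [ε_MV, 1 − ε_MV]], and let P̃_MV and Q̃_MV be the channel-corrupted measures defined by P̃_MV(A × {j}) = ∑_{i ∈ {0,1}} (C_{ε_MV})_{i,j} · P(A × {i}) for every measurable A ⊆ 𝒳 and j ∈ {0, 1}, and analogously for Q̃_MV. Then d_TV(P̃_MV, Q̃_MV) ≤ d_TV(P, Q) ≤ (1 − 2·exp(−2m(1/2 − ε_λ)²))^{-1} · d_TV(P̃_MV, Q̃_MV) ≤ (1 − 2ε_λ)^{-1} · d_TV(P̃_MV, Q̃_MV). -/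
open MeasureTheory Matrix

namespace MVAux

def sw {𝒳 : Type*} (p : 𝒳 × Fin 2) : 𝒳 × Fin 2 := (p.1, 1 - p.2)

lemma sw_meas {𝒳 : Type*} [MeasurableSpace 𝒳] : Measurable (sw (𝒳 := 𝒳)) :=
  measurable_fst.prodMk (Measurable.of_discrete.comp measurable_snd)

lemma sw_sw {𝒳 : Type*} (p : 𝒳 × Fin 2) : sw (sw p) = p := by
  cases p with | mk x i => simp [sw]

lemma sw_pre_pre {𝒳 : Type*} (S : Set (𝒳 × Fin 2)) : sw ⁻¹' (sw ⁻¹' S) = S := by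
  ext p; simp [sw_sw]

set_option maxRecDepth 8000 in
lemma corrupted_eq {𝒳 : Type*} [MeasurableSpace 𝒳] (ε : ℝ)
    (P Ptil : Measure (𝒳 × Fin 2))
    (hP : IsChannelCorrupted !![1 - ε, ε; ε, 1 - ε] P Ptil)
    (S : Set (𝒳 × Fin 2)) (hS : MeasurableSet S) :
    Ptil S = ENNReal.ofReal (1 - ε) * P S + ENNReal.ofReal ε * P (sw ⁻¹' S) := by
  have hAm : ∀ j : Fin 2, MeasurableSet ((fun x => (x, j)) ⁻¹' S) :=
    fun j => hS.preimage (measurable_id.prodMk measurable_const)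
  have hSeq : S = ((fun x => (x, (0:Fin 2))) ⁻¹' S) ×ˢ ({0} : Set (Fin 2))
      ∪ ((fun x => (x, (1:Fin 2))) ⁻¹' S) ×ˢ ({1} : Set (Fin 2)) := by
    ext ⟨x, i⟩
    fin_cases i <;> simp
  have hSweq : sw ⁻¹' S = ((fun x => (x, (1:Fin 2))) ⁻¹' S) ×ˢ ({0} : Set (Fin 2))
      ∪ ((fun x => (x, (0:Fin 2))) ⁻¹' S) ×ˢ ({1} : Set (Fin 2)) := by
    ext ⟨x, i⟩
    fin_cases i <;> simp [sw]
  have hdis : ∀ B C : Set 𝒳,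
      Disjoint (B ×ˢ ({0} : Set (Fin 2))) (C ×ˢ ({1} : Set (Fin 2))) := by
    intro B C
    rw [Set.disjoint_iff]
    rintro ⟨x, i⟩ ⟨⟨-, h0⟩, ⟨-, h1⟩⟩
    rw [Set.mem_singleton_iff] at h0 h1
    subst h0
    simp at h1
  have e00 := hP _ (hAm 0) 0
  have e11 := hP _ (hAm 1) 1
  simp only [Fin.sum_univ_two, Matrix.cons_val_zero, Matrix.cons_val_one, Matrix.head_cons,
    Matrix.head_fin_const, Matrix.cons_val', Matrix.empty_val', Matrix.cons_val_fin_one,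
    Matrix.of_apply] at e00 e11
  have hPt : Ptil S = Ptil (((fun x => (x, (0:Fin 2))) ⁻¹' S) ×ˢ ({0} : Set (Fin 2)))
      + Ptil (((fun x => (x, (1:Fin 2))) ⁻¹' S) ×ˢ ({1} : Set (Fin 2))) := by
    conv_lhs => rw [hSeq]
    exact measure_union (hdis _ _) ((hAm 1).prod (measurableSet_singleton 1))
  have hPS : P S = P (((fun x => (x, (0:Fin 2))) ⁻¹' S) ×ˢ ({0} : Set (Fin 2)))
      + P (((fun x => (x, (1:Fin 2))) ⁻¹' S) ×ˢ ({1} : Set (Fin 2))) := by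
    conv_lhs => rw [hSeq]
    exact measure_union (hdis _ _) ((hAm 1).prod (measurableSet_singleton 1))
  have hPsw : P (sw ⁻¹' S) = P (((fun x => (x, (1:Fin 2))) ⁻¹' S) ×ˢ ({0} : Set (Fin 2)))
      + P (((fun x => (x, (0:Fin 2))) ⁻¹' S) ×ˢ ({1} : Set (Fin 2))) := by
    conv_lhs => rw [hSweq]
    exact measure_union (hdis _ _) ((hAm 0).prod (measurableSet_singleton 1))
  rw [hPt, hPS, hPsw, e00, e11]
  ring

lemma corrupted_toReal {𝒳 : Type*} [MeasurableSpace 𝒳] (ε : ℝ) (hε0 : 0 ≤ ε) (hε1 : ε ≤ 1)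
    (P Ptil : Measure (𝒳 × Fin 2)) [IsProbabilityMeasure P]
    (hP : IsChannelCorrupted !![1 - ε, ε; ε, 1 - ε] P Ptil)
    (S : Set (𝒳 × Fin 2)) (hS : MeasurableSet S) :
    (Ptil S).toReal = (1 - ε) * (P S).toReal + ε * (P (sw ⁻¹' S)).toReal := by
  rw [corrupted_eq ε P Ptil hP S hS, ENNReal.toReal_add, ENNReal.toReal_mul,
    ENNReal.toReal_mul, ENNReal.toReal_ofReal hε0, ENNReal.toReal_ofReal (by linarith)]
  · exact ENNReal.mul_ne_top ENNReal.ofReal_ne_top (measure_ne_top P S)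
  · exact ENNReal.mul_ne_top ENNReal.ofReal_ne_top (measure_ne_top P _)

lemma toReal_le_one {𝒳 : Type*} [MeasurableSpace 𝒳] (P : Measure 𝒳)
    [IsProbabilityMeasure P] (S : Set 𝒳) : (P S).toReal ≤ 1 := by
  have := prob_le_one (μ := P) (s := S)
  exact ENNReal.toReal_le_of_le_ofReal one_pos.le (by simpa using this)

end MVAux

open MVAux in
/-- **Claim (2), total variation version.** Let `εL ∈ (0, 1/2)` be the labeling error of
each of `m ≥ log(1/εL) / (2 (1/2 - εL)²)` labeling functions and let
`εMV ∈ (0, 1/2)` with `εMV ≤ exp(-2 m (1/2 - εL)²)` be the majority-vote labeling error.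
If `P̃_MV` and `Q̃_MV` are obtained from probability measures `P` and `Q` on `𝒳 × {0,1}`
by flipping the label with probability `εMV` (channel matrix
`C = [[1-εMV, εMV], [εMV, 1-εMV]]`), then
`d_TV(P̃_MV, Q̃_MV) ≤ d_TV(P, Q) ≤ (1 - 2 exp(-2 m (1/2 - εL)²))⁻¹ d_TV(P̃_MV, Q̃_MV)
  ≤ (1 - 2 εL)⁻¹ d_TV(P̃_MV, Q̃_MV)`. -/
theorem majority_vote_rcgan_bound
    {𝒳 : Type*} [MeasurableSpace 𝒳]
    (P Q PtilMV QtilMV : Measure (𝒳 × Fin 2))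
    [IsProbabilityMeasure P] [IsProbabilityMeasure Q]
    (εL m εMV : ℝ) (hεL0 : 0 < εL) (hεL : εL < 1 / 2)
    (hm : m ≥ Real.log (1 / εL) / (2 * (1 / 2 - εL) ^ 2))
    (hεMV0 : 0 < εMV) (hεMV : εMV < 1 / 2)
    (hεMVle : εMV ≤ Real.exp (-2 * m * (1 / 2 - εL) ^ 2))
    (hP : IsChannelCorrupted !![1 - εMV, εMV; εMV, 1 - εMV] P PtilMV)
    (hQ : IsChannelCorrupted !![1 - εMV, εMV; εMV, 1 - εMV] Q QtilMV) :
    tvDist PtilMV QtilMV ≤ tvDist P Q ∧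
    tvDist P Q
      ≤ (1 - 2 * Real.exp (-2 * m * (1 / 2 - εL) ^ 2))⁻¹ * tvDist PtilMV QtilMV ∧
    (1 - 2 * Real.exp (-2 * m * (1 / 2 - εL) ^ 2))⁻¹ * tvDist PtilMV QtilMV
      ≤ (1 - 2 * εL)⁻¹ * tvDist PtilMV QtilMV := by
  set e := Real.exp (-2 * m * (1 / 2 - εL) ^ 2) with he
  have hc : (0:ℝ) < (1 / 2 - εL) ^ 2 := pow_pos (by linarith) 2
  have heεL : e ≤ εL := by
    have h1 : Real.log (1 / εL) ≤ m * (2 * (1 / 2 - εL) ^ 2) :=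
      (div_le_iff₀ (by linarith)).mp hm
    have h2 : Real.log (1 / εL) = -Real.log εL := by
      rw [one_div, Real.log_inv]
    have : -2 * m * (1 / 2 - εL) ^ 2 ≤ Real.log εL := by nlinarith
    calc e ≤ Real.exp (Real.log εL) := Real.exp_le_exp.mpr this
      _ = εL := Real.exp_log hεL0
  have he0 : 0 < e := Real.exp_pos _
  have heMVe : εMV ≤ e := hεMVle
  have hpos : (0:ℝ) < 1 - 2 * εMV := by linarith
  have hposE : (0:ℝ) < 1 - 2 * e := by linarith
  have hposL : (0:ℝ) < 1 - 2 * εL := by linarith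
  -- abbreviations
  set f : Set (𝒳 × Fin 2) → ℝ := fun T => (P T).toReal - (Q T).toReal with hf
  set ft : Set (𝒳 × Fin 2) → ℝ := fun T => (PtilMV T).toReal - (QtilMV T).toReal with hft
  have key1 : ∀ T : Set (𝒳 × Fin 2), MeasurableSet T →
      ft T = (1 - εMV) * f T + εMV * f (sw ⁻¹' T) := by
    intro T hT
    have hp := corrupted_toReal εMV hεMV0.le (by linarith) P PtilMV hP T hT
    have hq := corrupted_toReal εMV hεMV0.le (by linarith) Q QtilMV hQ T hT
    simp only [hf, hft]
    rw [hp, hq]; ring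
  have hf2 : ∀ T : Set (𝒳 × Fin 2), |f T| ≤ 2 := by
    intro T
    have h1 := toReal_le_one P T
    have h2 := toReal_le_one Q T
    have h3 : (0:ℝ) ≤ (P T).toReal := ENNReal.toReal_nonneg
    have h4 : (0:ℝ) ≤ (Q T).toReal := ENNReal.toReal_nonneg
    rw [abs_le]; constructor <;> simp only [hf] <;> linarith
  have hft2 : ∀ T : Set (𝒳 × Fin 2), MeasurableSet T → |ft T| ≤ 2 := by
    intro T hT
    rw [key1 T hT]
    calc |(1 - εMV) * f T + εMV * f (sw ⁻¹' T)|
        ≤ (1 - εMV) * |f T| + εMV * |f (sw ⁻¹' T)| := by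
          refine (abs_add_le _ _).trans ?_
          rw [abs_mul, abs_mul, abs_of_nonneg (by linarith : (0:ℝ) ≤ 1 - εMV),
            abs_of_nonneg hεMV0.le]
      _ ≤ (1 - εMV) * 2 + εMV * 2 :=
          add_le_add (mul_le_mul_of_nonneg_left (hf2 T) (by linarith))
            (mul_le_mul_of_nonneg_left (hf2 _) hεMV0.le)
      _ = 2 := by ring
  have bddD : BddAbove (Set.range fun A : {A : Set (𝒳 × Fin 2) // MeasurableSet A} =>
      |(P A.1).toReal - (Q A.1).toReal|) := by
    refine ⟨2, ?_⟩
    rintro x ⟨A, rfl⟩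
    exact hf2 A.1
  have bddDt : BddAbove (Set.range fun A : {A : Set (𝒳 × Fin 2) // MeasurableSet A} =>
      |(PtilMV A.1).toReal - (QtilMV A.1).toReal|) := by
    refine ⟨2, ?_⟩
    rintro x ⟨A, rfl⟩
    exact hft2 A.1 A.2
  have hfD : ∀ T : Set (𝒳 × Fin 2), MeasurableSet T → |f T| ≤ tvDist P Q :=
    fun T hT => le_ciSup bddD ⟨T, hT⟩
  have hftD : ∀ T : Set (𝒳 × Fin 2), MeasurableSet T → |ft T| ≤ tvDist PtilMV QtilMV :=
    fun T hT => le_ciSup bddDt ⟨T, hT⟩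
  have hDt0 : 0 ≤ tvDist PtilMV QtilMV :=
    le_trans (abs_nonneg _) (hftD ∅ MeasurableSet.empty)
  -- Part 1
  have part1 : tvDist PtilMV QtilMV ≤ tvDist P Q := by
    refine ciSup_le ?_
    rintro ⟨S, hS⟩
    have hswS : MeasurableSet (sw ⁻¹' S) := hS.preimage sw_meas
    calc |(PtilMV S).toReal - (QtilMV S).toReal| = |ft S| := rfl
      _ = |(1 - εMV) * f S + εMV * f (sw ⁻¹' S)| := by rw [key1 S hS]
      _ ≤ (1 - εMV) * |f S| + εMV * |f (sw ⁻¹' S)| := by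
          refine (abs_add_le _ _).trans ?_
          rw [abs_mul, abs_mul, abs_of_nonneg (by linarith : (0:ℝ) ≤ 1 - εMV),
            abs_of_nonneg hεMV0.le]
      _ ≤ (1 - εMV) * tvDist P Q + εMV * tvDist P Q :=
          add_le_add (mul_le_mul_of_nonneg_left (hfD S hS) (by linarith))
            (mul_le_mul_of_nonneg_left (hfD _ hswS) hεMV0.le)
      _ = tvDist P Q := by ring
  -- Part 2
  have key2 : ∀ T : Set (𝒳 × Fin 2), MeasurableSet T →
      (1 - 2 * εMV) * f T = (1 - εMV) * ft T - εMV * ft (sw ⁻¹' T) := by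
    intro T hT
    have hswT : MeasurableSet (sw ⁻¹' T) := hT.preimage sw_meas
    have h1 := key1 T hT
    have h2 := key1 (sw ⁻¹' T) hswT
    rw [sw_pre_pre] at h2
    nlinarith [h1, h2]
  have part2 : tvDist P Q ≤ (1 - 2 * εMV)⁻¹ * tvDist PtilMV QtilMV := by
    refine ciSup_le ?_
    rintro ⟨S, hS⟩
    have hswS : MeasurableSet (sw ⁻¹' S) := hS.preimage sw_meas
    have hkey : (1 - 2 * εMV) * |f S| ≤ tvDist PtilMV QtilMV := by
      calc (1 - 2 * εMV) * |f S| = |(1 - 2 * εMV) * f S| := by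
            rw [abs_mul, abs_of_pos hpos]
        _ = |(1 - εMV) * ft S - εMV * ft (sw ⁻¹' S)| := by rw [key2 S hS]
        _ ≤ (1 - εMV) * |ft S| + εMV * |ft (sw ⁻¹' S)| := by
            refine (abs_sub _ _).trans ?_
            rw [abs_mul, abs_mul, abs_of_nonneg (by linarith : (0:ℝ) ≤ 1 - εMV),
              abs_of_nonneg hεMV0.le]
        _ ≤ (1 - εMV) * tvDist PtilMV QtilMV + εMV * tvDist PtilMV QtilMV :=
            add_le_add (mul_le_mul_of_nonneg_left (hftD S hS) (by linarith))
              (mul_le_mul_of_nonneg_left (hftD _ hswS) hεMV0.le)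
        _ = tvDist PtilMV QtilMV := by ring
    have h' : |f S| = (1 - 2 * εMV)⁻¹ * ((1 - 2 * εMV) * |f S|) := by
      field_simp
    rw [h']
    exact mul_le_mul_of_nonneg_left hkey (inv_nonneg.mpr hpos.le)
  have step : (1 - 2 * εMV)⁻¹ * tvDist PtilMV QtilMV ≤ (1 - 2 * e)⁻¹ * tvDist PtilMV QtilMV :=
    mul_le_mul_of_nonneg_right (inv_anti₀ hposE (by linarith)) hDt0
  have part3 : (1 - 2 * e)⁻¹ * tvDist PtilMV QtilMV ≤ (1 - 2 * εL)⁻¹ * tvDist PtilMV QtilMV :=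
    mul_le_mul_of_nonneg_right (inv_anti₀ hposL (by linarith)) hDt0
  exact ⟨part1, part2.trans step, part3⟩
end
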